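/- arXiv:2003.12653 — 9 statements merged into one kernel-verified Lean document; each statement's English description precedes it below -/
import Mathlib

section
/- For every non-negative integer n and every real (or rational function) variable x, the identity ∑_{k=0}^{n} C(-x-1, k)^2 · C(x, n-k)^2 = ∑_{k=0}^{n} C(n+k, 2k) · C(2k, k)^2 · C(x+k, 2k) holds as an identity of polynomials in x. -/
open Finset Polynomial

lemma fac_mul_choose {R : Type*} [CommRing R] [BinomialRing R] (r : R) (k : ℕ) :
    (k.factorial : R) * Ring.choose r k = (descPochhammer R k).eval r := by
  have h := Ring.descPochhammer_eq_factorial_smul_choose r k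
  rw [nsmul_eq_mul] at h
  rw [← h, ← aeval_eq_smeval, aeval_def, ← eval_map, descPochhammer_map]

lemma choose_eval (p : ℚ[X]) (k : ℕ) (q : ℚ) :
    (Ring.choose p k).eval q = Ring.choose (p.eval q) k := by
  have h1 : ((k.factorial : ℚ[X]) * Ring.choose p k).eval q
      = ((descPochhammer ℚ k).comp p).eval q := by
    rw [fac_mul_choose]
    congr 1
    rw [← descPochhammer_map (C : ℚ →+* ℚ[X]), eval_map, comp, eval₂_eq_eval_map]
  rw [eval_mul, eval_natCast, eval_comp, ← fac_mul_choose] at h1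
  exact mul_left_cancel₀ (by exact_mod_cast k.factorial_ne_zero) h1

noncomputable def Lp (n : ℕ) : ℚ[X] :=
  ∑ k ∈ range (n + 1),
    (Ring.choose (-(X : ℚ[X]) - 1) k) ^ 2 * (Ring.choose (X : ℚ[X]) (n - k)) ^ 2

noncomputable def Rp (n : ℕ) : ℚ[X] :=
  ∑ k ∈ range (n + 1),
    ((n + k).choose (2 * k) : ℚ[X]) * (((2 * k).choose k : ℚ[X])) ^ 2 *
      Ring.choose ((X : ℚ[X]) + (k : ℚ[X])) (2 * k)

lemma evalL (n : ℕ) (q : ℚ) :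
    (Lp n).eval q = ∑ k ∈ range (n + 1),
      (Ring.choose (-q - 1) k) ^ 2 * (Ring.choose q (n - k)) ^ 2 := by
  rw [Lp, eval_finset_sum]
  refine Finset.sum_congr rfl fun k _ => ?_
  simp [choose_eval]

lemma evalR (n : ℕ) (q : ℚ) :
    (Rp n).eval q = ∑ k ∈ range (n + 1),
      ((n + k).choose (2 * k) : ℚ) * (((2 * k).choose k : ℚ)) ^ 2 *
        Ring.choose (q + (k : ℚ)) (2 * k) := by
  rw [Rp, eval_finset_sum]
  refine Finset.sum_congr rfl fun k _ => ?_
  simp [choose_eval]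

def Lnat (n m : ℕ) : ℕ := ∑ k ∈ range (n + 1), ((m + k).choose k) ^ 2 * (m.choose (n - k)) ^ 2

def Snat (n m : ℕ) : ℕ :=
  ∑ k ∈ range (n + 1), (n + k).choose (2 * k) * ((2 * k).choose k) ^ 2 * ((m + k).choose (2 * k))

lemma Lnat_symm_form (n m : ℕ) :
    Lnat n m = ∑ j ∈ range (n + 1), (m.choose j) ^ 2 * ((m + n - j).choose (n - j)) ^ 2 := by
  rw [Lnat, ← Finset.sum_range_reflect]
  refine Finset.sum_congr rfl fun j hj => ?_
  have hj' : j ≤ n := by simpa [Nat.lt_succ_iff] using hj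
  have h1 : n + 1 - 1 - j = n - j := by omega
  have h2 : m + (n - j) = m + n - j := by omega
  have h3 : n - (n - j) = j := by omega
  rw [h1, h2, h3, mul_comm]

lemma Lnat_eq_mid (n m : ℕ) :
    Lnat n m = ∑ j ∈ range (min m n + 1),
      ((m + n - j).choose j) ^ 2 * ((m + n - 2 * j).choose (m - j)) ^ 2 := by
  rw [Lnat_symm_form]
  rw [← Finset.sum_subset (Finset.range_subset_range.2 (by omega : min m n + 1 ≤ n + 1))
    (fun j hj hnj => ?_)]
  · refine Finset.sum_congr rfl fun j hj => ?_
    have hjm : j ≤ m := by simp [Nat.lt_succ_iff] at hj; omega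
    have hjn : j ≤ n := by simp [Nat.lt_succ_iff] at hj; omega
    have hsym : (m + n - j).choose (n - j) = (m + n - j).choose m := by
      have : n - j = (m + n - j) - m := by omega
      rw [this, Nat.choose_symm (by omega)]
    rw [← mul_pow, ← mul_pow, hsym, mul_comm (m.choose j),
      Nat.choose_mul hjm,
      show m + n - j - j = m + n - 2 * j by omega]
  · have hjn : j ≤ n := by simp [Nat.lt_succ_iff] at hj; omega
    have hjm : m < j := by simp [Nat.lt_succ_iff] at hj hnj; omega
    simp [Nat.choose_eq_zero_of_lt hjm]

lemma Lnat_swap (n m : ℕ) : Lnat n m = Lnat m n := by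
  rw [Lnat_eq_mid n m, Lnat_eq_mid m n, min_comm]
  refine Finset.sum_congr rfl fun j hj => ?_
  have hjm : j ≤ m := by simp [Nat.lt_succ_iff, min_comm m n] at hj; omega
  have hjn : j ≤ n := by simp [Nat.lt_succ_iff, min_comm m n] at hj; omega
  rw [show n + m - j = m + n - j by omega, show n + m - 2 * j = m + n - 2 * j by omega]
  congr 1
  have : n - j = (m + n - 2 * j) - (m - j) := by omega
  rw [this, Nat.choose_symm (by omega)]

lemma chain (n k : ℕ) (h : k ≤ n) :
    (n + k).choose (2 * k) * (2 * k).choose k = (n + k).choose k * n.choose k := by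
  have := Nat.choose_mul (n := n + k) (k := 2 * k) (s := k) (by omega)
  rw [this, show n + k - k = n by omega, show 2 * k - k = k by omega]

lemma Lnat_diag (n : ℕ) : Lnat n n = Snat n n := by
  rw [Lnat, Snat]
  refine Finset.sum_congr rfl fun k hk => ?_
  have hkn : k ≤ n := by simpa [Nat.lt_succ_iff] using hk
  rw [Nat.choose_symm hkn, ← mul_pow,
    show (n + k).choose (2 * k) * ((2 * k).choose k) ^ 2 * ((n + k).choose (2 * k))
      = ((n + k).choose (2 * k) * (2 * k).choose k) ^ 2 by ring,
    chain n k hkn]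

lemma Snat_ext (m n : ℕ) (h : m ≤ n) : Snat m n = Snat n m := by
  rw [Snat, Snat,
    ← Finset.sum_subset (Finset.range_subset_range.2 (by omega : m + 1 ≤ n + 1))
    (fun k hk hnk => ?_)]
  · exact Finset.sum_congr rfl fun k hk => by ring
  · have : m + k < 2 * k := by simp [Nat.lt_succ_iff] at hk hnk; omega
    simp [Nat.choose_eq_zero_of_lt this]
lemma choose_nat' (m j : ℕ) : Ring.choose ((m : ℚ)) j = (m.choose j : ℚ) :=
  Ring.choose_natCast m j

lemma choose_neg (m j : ℕ) :
    Ring.choose (-(m : ℚ) - 1) j = (-1) ^ j * ((m + j).choose j : ℚ) := by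
  apply mul_left_cancel₀ (a := (j.factorial : ℚ)) (by exact_mod_cast j.factorial_ne_zero)
  rw [fac_mul_choose, descPochhammer_eval_eq_ascPochhammer]
  have h : -(m : ℚ) - 1 - j + 1 = -((m + j : ℕ) : ℚ) := by push_cast; ring
  rw [h, ascPochhammer_eval_neg_eq_descPochhammer, descPochhammer_eval_eq_descFactorial,
    Nat.descFactorial_eq_factorial_mul_choose]
  push_cast
  ring

lemma neg_sq_helper (a : ℚ) (k : ℕ) : ((-1) ^ k * a) ^ 2 = a ^ 2 := by
  rw [mul_pow, ← pow_mul, mul_comm k 2, pow_mul]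
  norm_num

lemma LevalNat (n m : ℕ) : (Lp n).eval (m : ℚ) = (Lnat n m : ℚ) := by
  rw [evalL, Lnat]
  push_cast
  refine Finset.sum_congr rfl fun k _ => ?_
  rw [show -(m : ℚ) - 1 = -(m : ℚ) - 1 from rfl, choose_neg, neg_sq_helper, choose_nat']

lemma LevalNeg (n m : ℕ) : (Lp n).eval (-(m : ℚ) - 1) = (Lnat n m : ℚ) := by
  rw [evalL, Lnat_symm_form]
  push_cast
  refine Finset.sum_congr rfl fun k hk => ?_
  have hk' : k ≤ n := by simpa [Nat.lt_succ_iff] using hk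
  have h1 : -(-(m : ℚ) - 1) - 1 = (m : ℚ) := by ring
  rw [h1, choose_nat', show -(m:ℚ) - 1 = -(m:ℚ) - 1 from rfl, choose_neg, neg_sq_helper]
  rw [show m + (n - k) = m + n - k by omega]

lemma RevalNat (n m : ℕ) : (Rp n).eval (m : ℚ) = (Snat n m : ℚ) := by
  rw [evalR, Snat]
  push_cast
  refine Finset.sum_congr rfl fun k _ => ?_
  rw [show (m : ℚ) + (k : ℚ) = ((m + k : ℕ) : ℚ) by push_cast; ring, choose_nat']

lemma RevalNeg (n m : ℕ) : (Rp n).eval (-(m : ℚ) - 1) = (Snat n m : ℚ) := by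
  rw [evalR, Snat]
  push_cast
  refine Finset.sum_congr rfl fun k _ => ?_
  have key : Ring.choose (-(m : ℚ) - 1 + (k : ℚ)) (2 * k) = (((m + k).choose (2 * k) : ℕ) : ℚ) := by
    rcases le_or_gt k m with h | h
    · have h1 : -(m : ℚ) - 1 + (k : ℚ) = -((m - k : ℕ) : ℚ) - 1 := by
        rw [Nat.cast_sub h]; ring
      rw [h1, choose_neg, show m - k + 2 * k = m + k by omega, pow_mul]
      norm_num
    · have h1 : -(m : ℚ) - 1 + (k : ℚ) = ((k - m - 1 : ℕ) : ℚ) := by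
        rw [Nat.cast_sub (by omega : 1 ≤ k - m), Nat.cast_sub (by omega : m ≤ k)]
        push_cast
        ring
      rw [h1, choose_nat', Nat.choose_eq_zero_of_lt (by omega), Nat.choose_eq_zero_of_lt (by omega)]
  rw [key]
lemma descPoch_eval_prod {R : Type*} [CommRing R] (k : ℕ) (r : R) :
    (descPochhammer R k).eval r = ∏ i ∈ range k, (r - i) := by
  induction k with
  | zero => simp
  | succ k ih => rw [descPochhammer_succ_eval, ih, prod_range_succ]

lemma natDeg_choose (p : ℚ[X]) (hp : p.natDegree ≤ 1) (k : ℕ) :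
    (Ring.choose p k).natDegree ≤ k := by
  have h := fac_mul_choose p k
  rw [descPoch_eval_prod] at h
  have h2 : ((k.factorial : ℚ[X]) * Ring.choose p k).natDegree ≤ k := by
    rw [h]
    refine le_trans (natDegree_prod_le _ _) ?_
    refine le_trans (Finset.sum_le_card_nsmul _ _ 1 ?_) (by simp)
    intro i _
    exact le_trans (natDegree_sub_le _ _) (by simpa using hp)
  rwa [(C_eq_natCast (k.factorial) (R := ℚ)).symm,
    natDegree_C_mul_eq_of_mul_eq_one
      (inv_mul_cancel₀ (by exact_mod_cast k.factorial_ne_zero))] at h2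

lemma Lp_deg (n : ℕ) : (Lp n).natDegree ≤ 2 * n := by
  rw [Lp]
  refine natDegree_sum_le_of_forall_le _ _ fun k hk => ?_
  have hk' : k ≤ n := by simpa [Nat.lt_succ_iff] using hk
  have h1 : (-(X : ℚ[X]) - 1).natDegree ≤ 1 :=
    le_trans (natDegree_sub_le _ _) (by simp)
  have h2 : (Ring.choose (-(X : ℚ[X]) - 1) k).natDegree ≤ k := natDeg_choose _ h1 k
  have h3 : (Ring.choose (X : ℚ[X]) (n - k)).natDegree ≤ n - k :=
    natDeg_choose _ (by simp) (n - k)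
  refine le_trans (natDegree_mul_le) ?_
  have p1 : ((Ring.choose (-(X : ℚ[X]) - 1) k) ^ 2).natDegree ≤ 2 * k :=
    le_trans natDegree_pow_le (by omega)
  have p2 : ((Ring.choose (X : ℚ[X]) (n - k)) ^ 2).natDegree ≤ 2 * (n - k) :=
    le_trans natDegree_pow_le (by omega)
  omega

lemma Rp_deg (n : ℕ) : (Rp n).natDegree ≤ 2 * n := by
  rw [Rp]
  refine natDegree_sum_le_of_forall_le _ _ fun k hk => ?_
  have hk' : k ≤ n := by simpa [Nat.lt_succ_iff] using hk
  have h1 : ((X : ℚ[X]) + (k : ℚ[X])).natDegree ≤ 1 :=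
    le_trans (natDegree_add_le _ _) (by simp)
  have h2 : (Ring.choose ((X : ℚ[X]) + (k : ℚ[X])) (2 * k)).natDegree ≤ 2 * k :=
    natDeg_choose _ h1 (2 * k)
  refine le_trans (natDegree_mul_le) (le_trans (add_le_add (natDegree_mul_le) h2) ?_)
  have c1 : (((n + k).choose (2 * k) : ℚ[X])).natDegree = 0 := natDegree_natCast _
  have c2 : ((((2 * k).choose k : ℚ[X])) ^ 2).natDegree ≤ 0 :=
    le_trans natDegree_pow_le (by simp [natDegree_natCast])
  omega

theorem stmt_0 (n : ℕ) :
    ∑ k ∈ range (n + 1),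
        (Ring.choose (-(X : ℚ[X]) - 1) k) ^ 2 * (Ring.choose (X : ℚ[X]) (n - k)) ^ 2 =
      ∑ k ∈ range (n + 1),
        ((n + k).choose (2 * k) : ℚ[X]) * (((2 * k).choose k : ℚ[X])) ^ 2 *
          Ring.choose ((X : ℚ[X]) + (k : ℚ[X])) (2 * k) := by
  induction n using Nat.strong_induction_on with
  | _ n IH =>
  show Lp n = Rp n
  have key : ∀ m : ℕ, m ≤ n → Lnat n m = Snat n m := by
    intro m hm
    rcases eq_or_lt_of_le hm with rfl | hlt
    · exact Lnat_diag m
    · have hP : Lp m = Rp m := IH m hlt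
      have h1 := congrArg (Polynomial.eval (n : ℚ)) hP
      rw [LevalNat, RevalNat] at h1
      have h2 : Lnat m n = Snat m n := by exact_mod_cast h1
      rw [Lnat_swap, h2, Snat_ext m n (le_of_lt hlt)]
  apply Polynomial.eq_of_degree_sub_lt_of_eval_index_eq
    (v := fun i : ℕ => (i : ℚ) - (n + 1)) (range (2 * n + 2))
  · intro a ha b hb hab
    have hab' : (a : ℚ) - ((n : ℚ) + 1) = (b : ℚ) - ((n : ℚ) + 1) := hab
    have : (a : ℚ) = (b : ℚ) := by linarith
    exact_mod_cast this
  · rw [card_range]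
    have hd : (Lp n - Rp n).natDegree < 2 * n + 2 := by
      have := natDegree_sub_le (Lp n) (Rp n)
      have := Lp_deg n
      have := Rp_deg n
      omega
    exact lt_of_le_of_lt degree_le_natDegree (by exact_mod_cast hd)
  · intro i hi
    rw [mem_range] at hi
    rcases le_or_gt (n + 1) i with h | h
    · have heq : (i : ℚ) - ((n : ℚ) + 1) = ((i - (n + 1) : ℕ) : ℚ) := by
        rw [Nat.cast_sub h]; push_cast; ring
      rw [heq, LevalNat, RevalNat]
      exact_mod_cast key _ (by omega)
    · have heq : (i : ℚ) - ((n : ℚ) + 1) = -(((n - i : ℕ)) : ℚ) - 1 := by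
        rw [Nat.cast_sub (by omega)]; push_cast; ring
      rw [heq, LevalNeg, RevalNeg]
      exact_mod_cast key _ (by omega)
end

section
/- For all non-negative integers n and k with k ≤ n-1, we have ∑_{m=k}^{n-1} (2m+1) · C(m+k, 2k) · C(2k, k) = n · C(n, k+1) · C(n+k, k). -/
open Finset
open Nat

private theorem base (k : ℕ) : (2*k+1) * (2*k).choose k = (k+1) * (2*k+1).choose k := by
  have h1 := Nat.add_one_mul_choose_eq (2*k) k
  have h2 : (2*k+1).choose (k+1) = (2*k+1).choose k := by
    have := Nat.choose_symm (show k ≤ 2*k+1 by omega)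
    simpa [show 2*k+1-k = k+1 by omega] using this
  rw [h2] at h1
  linarith

private theorem step (k e : ℕ) :
    (k+e+1) * (k+e+1).choose (k+1) * (2*k+e+1).choose k
      + (2*(k+e+1)+1) * (2*k+e+1).choose (2*k) * (2*k).choose k
    = (k+e+2) * (k+e+2).choose (k+1) * (2*k+e+2).choose k := by
  have cast_inj : ∀ a b : ℕ, (a : ℚ) = b → a = b := fun a b h => by exact_mod_cast h
  apply cast_inj
  push_cast
  rw [Nat.cast_choose ℚ (show k+1 ≤ k+e+1 by omega),
      Nat.cast_choose ℚ (show k ≤ 2*k+e+1 by omega),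
      Nat.cast_choose ℚ (show 2*k ≤ 2*k+e+1 by omega),
      Nat.cast_choose ℚ (show k ≤ 2*k by omega),
      Nat.cast_choose ℚ (show k+1 ≤ k+e+2 by omega),
      Nat.cast_choose ℚ (show k ≤ 2*k+e+2 by omega)]
  simp only [show k+e+1-(k+1) = e by omega, show 2*k+e+1-k = k+e+1 by omega,
    show 2*k+e+1-2*k = e+1 by omega, show 2*k-k = k by omega,
    show k+e+2-(k+1) = e+1 by omega, show 2*k+e+2-k = k+e+2 by omega]
  rw [show (e+1)! = (e+1) * (e !) by rw [Nat.factorial_succ],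
      show (k+e+2)! = (k+e+2) * (k+e+1)! by rw [← Nat.factorial_succ],
      show (2*k+e+2)! = (2*k+e+2) * (2*k+e+1)! by rw [← Nat.factorial_succ],
      show (k+1)! = (k+1) * (k !) by rw [Nat.factorial_succ]]
  have h1 : (e ! : ℚ) ≠ 0 := by positivity
  have h2 : (k ! : ℚ) ≠ 0 := by positivity
  have h3 : ((k+e+1)! : ℚ) ≠ 0 := by positivity
  have h4 : ((2*k+e+1)! : ℚ) ≠ 0 := by positivity
  have h5 : ((2*k)! : ℚ) ≠ 0 := by positivity
  field_simp
  push_cast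
  ring

private theorem key (k n : ℕ) :
    ∑ m ∈ Finset.Ico k n, (2 * m + 1) * (m + k).choose (2 * k) * (2 * k).choose k =
      n * n.choose (k + 1) * (n + k).choose k := by
  induction n with
  | zero => simp
  | succ n ih =>
    rcases Nat.lt_or_ge n k with hlt | hge
    · have hz : (n+1).choose (k+1) = 0 := Nat.choose_eq_zero_of_lt (by omega)
      rw [Finset.Ico_eq_empty (by omega), hz]
      simp
    · rw [Finset.sum_Ico_succ_top hge, ih]
      obtain ⟨e, rfl⟩ := Nat.exists_eq_add_of_le hge
      cases e with
      | zero =>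
        simp only [Nat.add_zero]
        rw [Nat.choose_eq_zero_of_lt (by omega), show k + k = 2*k by ring,
          Nat.choose_self, Nat.choose_self]
        have := base k
        have h2 : k + 1 + k = 2*k+1 := by ring
        rw [h2]
        linarith
      | succ e =>
        have h1 : k + (e+1) + k = 2*k+e+1 := by ring
        have h2 : k + (e+1) + 1 + k = 2*k+e+2 := by ring
        rw [h1, h2, show k + (e+1) = k+e+1 by ring, show k+e+1+1 = k+e+2 by ring,
          show 2*(k+e+1)+1 = 2*(k+e+1)+1 by ring]
        exact step k e

theorem stmt_1 (n k : ℕ) (h : k ≤ n - 1) (hn : 0 < n) :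
    ∑ m ∈ Finset.Ico k n, (2 * m + 1) * (m + k).choose (2 * k) * (2 * k).choose k =
      n * n.choose (k + 1) * (n + k).choose k := key k n
end

section
/- Let n be a positive integer and x an integer. Then n divides the integer ∑_{k=0}^{n-1} (2k+1) · ∑_{j=0}^{k} C(-x-1, j)^2 · C(x, k-j)^2. (Case l = 1, ε = +1 of the main theorem.) -/
open Finset

private theorem ringChoose_succ (r : ℤ) (k : ℕ) :
    (k + 1 : ℤ) * Ring.choose r (k + 1) = (r - k) * Ring.choose r k := by
  have h1 := Ring.descPochhammer_eq_factorial_smul_choose r (k+1)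
  have h2 := Ring.descPochhammer_eq_factorial_smul_choose r k
  have h3 : (descPochhammer ℤ (k+1)).smeval r = (descPochhammer ℤ k).smeval r * (r - k) := by
    rw [descPochhammer_succ_right]
    simp [Polynomial.smeval_mul, Polynomial.smeval_sub, Polynomial.smeval_X,
      Polynomial.smeval_natCast]
  rw [h1, h2] at h3
  have hf : (Nat.factorial k : ℤ) ≠ 0 := Int.natCast_ne_zero.mpr (Nat.factorial_ne_zero k)
  refine mul_left_cancel₀ hf ?_
  rw [Nat.factorial_succ] at h3
  rw [nsmul_eq_mul, nsmul_eq_mul] at h3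
  push_cast at h3
  linarith [h3]

private noncomputable def aa (x : ℤ) (j : ℕ) : ℚ := ((Ring.choose (-x - 1) j : ℤ) : ℚ)
private noncomputable def bb (x : ℤ) (i : ℕ) : ℚ := ((Ring.choose x i : ℤ) : ℚ)
private noncomputable def uu (x : ℤ) (k : ℕ) : ℚ := (-1 : ℚ) ^ k * aa x k * bb x k

private theorem haa (x : ℤ) (j : ℕ) :
    ((j : ℚ) + 1) * aa x (j + 1) = (-(x : ℚ) - 1 - j) * aa x j := by
  have := ringChoose_succ (-x - 1) j
  unfold aa
  exact_mod_cast this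

private theorem hbb (x : ℤ) (i : ℕ) :
    ((i : ℚ) + 1) * bb x (i + 1) = ((x : ℚ) - i) * bb x i := by
  have := ringChoose_succ x i
  unfold bb
  exact_mod_cast this

private theorem aa_zero (x : ℤ) : aa x 0 = 1 := by
  unfold aa; rw [Ring.choose_zero_right]; norm_num

private theorem bb_zero (x : ℤ) : bb x 0 = 1 := by
  unfold bb; rw [Ring.choose_zero_right]; norm_num

private theorem aa_one (x : ℤ) : aa x 1 = -(x : ℚ) - 1 := by
  unfold aa; rw [Ring.choose_one_right]; push_cast; ring

private theorem bb_one (x : ℤ) : bb x 1 = (x : ℚ) := by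
  unfold bb; rw [Ring.choose_one_right]

private noncomputable def ff (x : ℤ) (m : ℕ) : ℚ :=
  ∑ j ∈ range (m + 1), aa x j ^ 2 * bb x (m - j) ^ 2

private noncomputable def gg (x : ℤ) (m : ℕ) : ℚ :=
  ∑ k ∈ range (m + 1), ((m + k).choose (2 * k) * (2 * k).choose k : ℕ) * uu x k

private theorem huu (x : ℤ) (k : ℕ) :
    ((k : ℚ) + 1) ^ 2 * uu x (k + 1) = ((x : ℚ) + 1 + k) * ((x : ℚ) - k) * uu x k := by
  have h1 := haa x k
  have h2 := hbb x k
  unfold uu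
  have : ((k:ℚ)+1) * aa x (k+1) * (((k:ℚ)+1) * bb x (k+1)) =
      (-(x:ℚ)-1-k) * aa x k * (((x:ℚ)-k) * bb x k) := by rw [h1, h2]
  linear_combination ((-1 : ℚ) ^ (k + 1)) * this

private theorem rec_ff (x : ℤ) (m : ℕ) :
    (-((m : ℚ) + 1) ^ 3) * ff x m
      + ((2 * (m : ℚ) + 3) * ((m : ℚ) ^ 2 + 3 * m + 3 + 2 * (x : ℚ) ^ 2 + 2 * x)) * ff x (m + 1)
      + (-((m : ℚ) + 2) ^ 3) * ff x (m + 2) = 0 := by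
  have hG : ∃ G : ℕ → ℚ, G = fun j =>
      aa x j ^ 2 * ((((j : ℚ)) * (-(m:ℚ) ^ 2 + 3 * (m:ℚ) * (x:ℚ) - (m:ℚ) - 2 * (x:ℚ) ^ 2 + 2 * (x:ℚ))
            - ((j : ℚ)) ^ 2 * (2 * (x:ℚ) + 1)) * bb x (m + 1 - j) ^ 2
          + (((j : ℚ)) * ((m:ℚ) + 2) * ((x:ℚ) + 1)) * bb x (m + 1 - j) * bb x (m + 2 - j)
          + (((j : ℚ)) * ((m:ℚ) + 2) ^ 2) * bb x (m + 2 - j) ^ 2) := ⟨_, rfl⟩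
  obtain ⟨G, hG⟩ := hG
  have key : ∀ j ∈ range (m + 1),
      (-((m:ℚ) + 1) ^ 3) * (aa x j ^ 2 * bb x (m - j) ^ 2)
        + ((2 * (m:ℚ) + 3) * ((m:ℚ) ^ 2 + 3 * (m:ℚ) + 3 + 2 * (x:ℚ) ^ 2 + 2 * (x:ℚ))) * (aa x j ^ 2 * bb x (m + 1 - j) ^ 2)
        + (-((m:ℚ) + 2) ^ 3) * (aa x j ^ 2 * bb x (m + 2 - j) ^ 2)
      = G (j + 1) - G j := by
    intro j hj
    rw [mem_range] at hj
    obtain ⟨i, rfl⟩ : ∃ i, m = j + i := ⟨m - j, by omega⟩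
    have e1 : j + i - j = i := by omega
    have e2 : j + i + 1 - j = i + 1 := by omega
    have e3 : j + i + 2 - j = i + 2 := by omega
    have e4 : j + i + 1 - (j + 1) = i := by omega
    have e5 : j + i + 2 - (j + 1) = i + 1 := by omega
    simp only [hG, e1, e2, e3, e4, e5]
    have Ha := haa x j
    have Hb0 := hbb x i
    have Hb1 := hbb x (i + 1)
    have hj1 : ((j : ℚ) + 1) ≠ 0 := by positivity
    have hi0 : ((i : ℚ) + 1) ≠ 0 := by positivity
    have hi1 : ((i : ℚ) + 2) ≠ 0 := by positivity
    have ea : aa x (j + 1) = (-(x:ℚ) - 1 - j) * aa x j / ((j : ℚ) + 1) := by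
      field_simp at Ha ⊢; linarith
    have eb2 : bb x (i + 2) = ((x:ℚ) - ((i : ℚ) + 1)) * bb x (i + 1) / ((i : ℚ) + 2) := by
      field_simp at Hb1 ⊢; push_cast at Hb1 ⊢; linarith
    have eb1 : bb x (i + 1) = ((x:ℚ) - i) * bb x i / ((i : ℚ) + 1) := by
      field_simp at Hb0 ⊢; linarith
    rw [ea, eb2, eb1]
    push_cast
    field_simp
    ring
  have tel : ∑ j ∈ range (m + 1), (G (j + 1) - G j) = G (m + 1) - G 0 :=
    Finset.sum_range_sub G (m + 1)
  have hsum := Finset.sum_congr rfl key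
  rw [tel] at hsum
  have hf1 : ff x (m + 1) = (∑ j ∈ range (m + 1), aa x j ^ 2 * bb x (m + 1 - j) ^ 2)
      + aa x (m + 1) ^ 2 * bb x 0 ^ 2 := by
    unfold ff
    rw [Finset.sum_range_succ]
    simp
  have hf2 : ff x (m + 2) = (∑ j ∈ range (m + 1), aa x j ^ 2 * bb x (m + 2 - j) ^ 2)
      + aa x (m + 1) ^ 2 * bb x 1 ^ 2 + aa x (m + 2) ^ 2 * bb x 0 ^ 2 := by
    unfold ff
    rw [show m + 2 + 1 = (m + 2) + 1 by rfl, Finset.sum_range_succ, Finset.sum_range_succ]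
    have e : m + 2 - (m + 1) = 1 := by omega
    simp [e]
  have hf0 : ff x m = ∑ j ∈ range (m + 1), aa x j ^ 2 * bb x (m - j) ^ 2 := rfl
  have hGm : G (m + 1) = aa x (m + 1) ^ 2 * (((((m : ℚ) + 1)) * (-(m:ℚ) ^ 2 + 3 * (m:ℚ) * (x:ℚ) - (m:ℚ) - 2 * (x:ℚ) ^ 2 + 2 * (x:ℚ))
          - (((m : ℚ) + 1)) ^ 2 * (2 * (x:ℚ) + 1)) * bb x 0 ^ 2
        + ((((m : ℚ) + 1)) * ((m:ℚ) + 2) * ((x:ℚ) + 1)) * bb x 0 * bb x 1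
        + ((((m : ℚ) + 1)) * ((m:ℚ) + 2) ^ 2) * bb x 1 ^ 2) := by
    have e6 : m + 1 - (m + 1) = 0 := by omega
    have e7 : m + 2 - (m + 1) = 1 := by omega
    simp only [hG, e6, e7]
    push_cast
    ring
  have hG0 : G 0 = 0 := by
    simp only [hG]
    push_cast
    ring
  have hbd : G (m + 1) - G 0
      + ((2 * (m:ℚ) + 3) * ((m:ℚ) ^ 2 + 3 * (m:ℚ) + 3 + 2 * (x:ℚ) ^ 2 + 2 * (x:ℚ))) * (aa x (m + 1) ^ 2 * bb x 0 ^ 2)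
      + (-((m:ℚ) + 2) ^ 3) * (aa x (m + 1) ^ 2 * bb x 1 ^ 2 + aa x (m + 2) ^ 2 * bb x 0 ^ 2) = 0 := by
    rw [hGm, hG0, bb_zero, bb_one]
    have Ha := haa x (m + 1)
    have hm2 : ((m : ℚ) + 2) ≠ 0 := by positivity
    have ea : aa x (m + 2) = (-(x:ℚ) - 1 - ((m : ℚ) + 1)) * aa x (m + 1) / ((m : ℚ) + 2) := by
      field_simp at Ha ⊢; push_cast at Ha ⊢; linarith
    rw [ea]
    field_simp
    ring
  have hA : (-((m:ℚ) + 1) ^ 3) * (∑ j ∈ range (m + 1), aa x j ^ 2 * bb x (m - j) ^ 2)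
      + ((2 * (m:ℚ) + 3) * ((m:ℚ) ^ 2 + 3 * (m:ℚ) + 3 + 2 * (x:ℚ) ^ 2 + 2 * (x:ℚ))) * (∑ j ∈ range (m + 1), aa x j ^ 2 * bb x (m + 1 - j) ^ 2)
      + (-((m:ℚ) + 2) ^ 3) * (∑ j ∈ range (m + 1), aa x j ^ 2 * bb x (m + 2 - j) ^ 2)
      = G (m + 1) - G 0 := by
    rw [Finset.mul_sum, Finset.mul_sum, Finset.mul_sum, ← hsum,
      ← Finset.sum_add_distrib, ← Finset.sum_add_distrib]
  rw [hf0, hf1, hf2]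
  linear_combination hA + hbd

private theorem choose_top (n r : ℕ) (h : r ≤ n) :
    (((n + 1).choose r : ℕ) : ℚ) * ((n : ℚ) + 1 - r) = ((n.choose r : ℕ) : ℚ) * ((n : ℚ) + 1) := by
  have hh := Nat.choose_mul_succ_eq n r
  have hcast : ((n + 1 - r : ℕ) : ℚ) = (n : ℚ) + 1 - r := by
    have : r ≤ n + 1 := by omega
    push_cast [this]
    ring
  calc (((n + 1).choose r : ℕ) : ℚ) * ((n : ℚ) + 1 - r)
      = (((n + 1).choose r * (n + 1 - r) : ℕ) : ℚ) := by push_cast [hcast]; ring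
    _ = ((n.choose r * (n + 1) : ℕ) : ℚ) := by rw [← hh]
    _ = ((n.choose r : ℕ) : ℚ) * ((n : ℚ) + 1) := by push_cast; ring

private theorem choose_low (n r : ℕ) (h : r ≤ n) :
    ((n.choose (r + 1) : ℕ) : ℚ) * ((r : ℚ) + 1) = ((n.choose r : ℕ) : ℚ) * ((n : ℚ) - r) := by
  have hh := Nat.choose_succ_right_eq n r
  have hcast : ((n - r : ℕ) : ℚ) = (n : ℚ) - r := by push_cast [h]; ring
  calc ((n.choose (r + 1) : ℕ) : ℚ) * ((r : ℚ) + 1)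
      = ((n.choose (r + 1) * (r + 1) : ℕ) : ℚ) := by push_cast; ring
    _ = ((n.choose r * (n - r) : ℕ) : ℚ) := by rw [hh]
    _ = ((n.choose r : ℕ) : ℚ) * ((n : ℚ) - r) := by push_cast [hcast]; ring

private theorem central_step (k : ℕ) :
    (((2 * k + 2).choose (k + 1) : ℕ) : ℚ) * ((k : ℚ) + 1) ^ 2
      = (((2 * k).choose k : ℕ) : ℚ) * ((2 * (k : ℚ) + 1) * (2 * (k : ℚ) + 2)) := by
  have h1 : (((2 * k + 1).choose (k + 1) : ℕ) : ℚ) * ((k : ℚ) + 1)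
      = (((2 * k + 1).choose k : ℕ) : ℚ) * ((k : ℚ) + 1) := by
    have := choose_low (2 * k + 1) k (by omega)
    push_cast at this ⊢
    linear_combination this
  have h2 : (((2 * k + 1).choose k : ℕ) : ℚ) * ((k : ℚ) + 1)
      = (((2 * k).choose k : ℕ) : ℚ) * (2 * (k : ℚ) + 1) := by
    have := choose_top (2 * k) k (by omega)
    push_cast at this ⊢
    linear_combination this
  have h3 : (((2 * k + 2).choose (k + 1) : ℕ) : ℚ) * ((k : ℚ) + 1)
      = (((2 * k + 1).choose (k + 1) : ℕ) : ℚ) * (2 * (k : ℚ) + 2) := by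
    have := choose_top (2 * k + 1) (k + 1) (by omega)
    push_cast at this ⊢
    linear_combination this
  have hk1 : ((k : ℚ) + 1) ≠ 0 := by positivity
  have e1 : (((2 * k + 1).choose (k + 1) : ℕ) : ℚ) = ((2 * k + 1).choose k : ℕ) :=
    mul_right_cancel₀ hk1 h1
  have e2 : (((2 * k + 1).choose k : ℕ) : ℚ)
      = (((2 * k).choose k : ℕ) : ℚ) * (2 * (k : ℚ) + 1) / ((k : ℚ) + 1) := by
    field_simp
    linarith [h2]
  calc (((2 * k + 2).choose (k + 1) : ℕ) : ℚ) * ((k : ℚ) + 1) ^ 2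
      = ((((2 * k + 2).choose (k + 1) : ℕ) : ℚ) * ((k : ℚ) + 1)) * ((k : ℚ) + 1) := by ring
    _ = (((2 * k + 1).choose (k + 1) : ℕ) : ℚ) * (2 * (k : ℚ) + 2) * ((k : ℚ) + 1) := by rw [h3]
    _ = (((2 * k).choose k : ℕ) : ℚ) * (2 * (k : ℚ) + 1) / ((k : ℚ) + 1) * (2 * (k : ℚ) + 2) * ((k : ℚ) + 1) := by
        rw [e1, e2]
    _ = (((2 * k).choose k : ℕ) : ℚ) * ((2 * (k : ℚ) + 1) * (2 * (k : ℚ) + 2)) := by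
        field_simp

private noncomputable def WW (x : ℤ) (m k : ℕ) : ℚ :=
  ((13 + 29*(m:ℚ) + 21*(m:ℚ)^2 + 5*(m:ℚ)^3 + (k:ℚ)*(18 + 24*(m:ℚ) + 8*(m:ℚ)^2)
      + (k:ℚ)^2*(6 + 4*(m:ℚ))) * (((m + k).choose (2*k) : ℕ) : ℚ)
    + (-(21 + 41*(m:ℚ) + 27*(m:ℚ)^2 + 6*(m:ℚ)^3)) * (((m + 1 + k).choose (2*k) : ℕ) : ℚ)
    + ((m:ℚ) + 2)^3 * (((m + 2 + k).choose (2*k) : ℕ) : ℚ))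
  * (((2*k).choose k : ℕ) : ℚ) * uu x k

set_option maxHeartbeats 3200000 in
private theorem gkey (x : ℤ) (m k : ℕ) (hk : k ≤ m) :
    (-((m:ℚ)+1)^3) * ((((m+k).choose (2*k) : ℕ) : ℚ) * (((2*k).choose k : ℕ) : ℚ) * uu x k)
    + ((2*(m:ℚ)+3)*((m:ℚ)^2+3*(m:ℚ)+3+2*(x:ℚ)^2+2*(x:ℚ)))
        * ((((m+1+k).choose (2*k) : ℕ) : ℚ) * (((2*k).choose k : ℕ) : ℚ) * uu x k)
    + (-((m:ℚ)+2)^3) * ((((m+2+k).choose (2*k) : ℕ) : ℚ) * (((2*k).choose k : ℕ) : ℚ) * uu x k)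
    = WW x m (k+1) - WW x m k := by
  obtain ⟨d, rfl⟩ : ∃ d, m = k + d := ⟨m - k, by omega⟩
  have i1 : k + d + k = 2*k+d := by omega
  have i2 : k + d + 1 + k = 2*k+d+1 := by omega
  have i3 : k + d + 2 + k = 2*k+d+2 := by omega
  have i4 : k + d + (k+1) = 2*k+d+1 := by omega
  have i5 : k + d + 1 + (k+1) = 2*k+d+2 := by omega
  have i6 : k + d + 2 + (k+1) = 2*k+d+3 := by omega
  have i7 : 2*(k+1) = 2*k+2 := by omega
  simp only [WW, i1, i2, i3, i4, i5, i6, i7]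
  have nd1 : ((d:ℚ)+1) ≠ 0 := by positivity
  have nd2 : ((d:ℚ)+2) ≠ 0 := by positivity
  have nd3 : ((d:ℚ)+3) ≠ 0 := by positivity
  have nk1 : (2*(k:ℚ)+1) ≠ 0 := by positivity
  have nk2 : (2*(k:ℚ)+2) ≠ 0 := by positivity
  have nk3 : ((k:ℚ)+1) ≠ 0 := by positivity
  have E1 : (((2*k+d+1).choose (2*k) : ℕ) : ℚ)
      = (2*(k:ℚ)+d+1)/((d:ℚ)+1) * (((2*k+d).choose (2*k) : ℕ) : ℚ) := by
    have h := choose_top (2*k+d) (2*k) (by omega)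
    push_cast at h
    field_simp
    linear_combination h
  have E2 : (((2*k+d+2).choose (2*k) : ℕ) : ℚ)
      = (2*(k:ℚ)+d+2)/((d:ℚ)+2) * (((2*k+d+1).choose (2*k) : ℕ) : ℚ) := by
    have h := choose_top (2*k+d+1) (2*k) (by omega)
    push_cast at h
    field_simp
    linear_combination h
  have E3 : (((2*k+d+3).choose (2*k) : ℕ) : ℚ)
      = (2*(k:ℚ)+d+3)/((d:ℚ)+3) * (((2*k+d+2).choose (2*k) : ℕ) : ℚ) := by
    have h := choose_top (2*k+d+2) (2*k) (by omega)
    push_cast at h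
    field_simp
    linear_combination h
  have F0 : (((2*k+d+1).choose (2*k+1) : ℕ) : ℚ)
      = ((d:ℚ)+1)/(2*(k:ℚ)+1) * (((2*k+d+1).choose (2*k) : ℕ) : ℚ) := by
    have h := choose_low (2*k+d+1) (2*k) (by omega)
    push_cast at h
    field_simp
    linear_combination h
  have F1 : (((2*k+d+2).choose (2*k+1) : ℕ) : ℚ)
      = ((d:ℚ)+2)/(2*(k:ℚ)+1) * (((2*k+d+2).choose (2*k) : ℕ) : ℚ) := by
    have h := choose_low (2*k+d+2) (2*k) (by omega)
    push_cast at h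
    field_simp
    linear_combination h
  have F2 : (((2*k+d+3).choose (2*k+1) : ℕ) : ℚ)
      = ((d:ℚ)+3)/(2*(k:ℚ)+1) * (((2*k+d+3).choose (2*k) : ℕ) : ℚ) := by
    have h := choose_low (2*k+d+3) (2*k) (by omega)
    push_cast at h
    field_simp
    linear_combination h
  have G0 : (((2*k+d+1).choose (2*k+2) : ℕ) : ℚ)
      = ((d:ℚ))/(2*(k:ℚ)+2) * (((2*k+d+1).choose (2*k+1) : ℕ) : ℚ) := by
    have h := choose_low (2*k+d+1) (2*k+1) (by omega)
    have i8 : 2*k+1+1 = 2*k+2 := by omega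
    rw [i8] at h
    push_cast at h
    field_simp
    linear_combination h
  have G1 : (((2*k+d+2).choose (2*k+2) : ℕ) : ℚ)
      = ((d:ℚ)+1)/(2*(k:ℚ)+2) * (((2*k+d+2).choose (2*k+1) : ℕ) : ℚ) := by
    have h := choose_low (2*k+d+2) (2*k+1) (by omega)
    have i8 : 2*k+1+1 = 2*k+2 := by omega
    rw [i8] at h
    push_cast at h
    field_simp
    linear_combination h
  have G2 : (((2*k+d+3).choose (2*k+2) : ℕ) : ℚ)
      = ((d:ℚ)+2)/(2*(k:ℚ)+2) * (((2*k+d+3).choose (2*k+1) : ℕ) : ℚ) := by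
    have h := choose_low (2*k+d+3) (2*k+1) (by omega)
    have i8 : 2*k+1+1 = 2*k+2 := by omega
    rw [i8] at h
    push_cast at h
    field_simp
    linear_combination h
  have Hd : (((2*k+2).choose (k+1) : ℕ) : ℚ)
      = (2*(k:ℚ)+1)*(2*(k:ℚ)+2)/((k:ℚ)+1)^2 * (((2*k).choose k : ℕ) : ℚ) := by
    have h := central_step k
    rw [div_mul_eq_mul_div, eq_div_iff (by positivity)]
    linear_combination h
  have HU : uu x (k+1) = ((x:ℚ)+1+k)*((x:ℚ)-k)/((k:ℚ)+1)^2 * uu x k := by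
    have h := huu x k
    have : (((k:ℚ)+1)^2) ≠ 0 := by positivity
    field_simp
    linear_combination h
  rw [G0, G1, G2, F0, F1, F2, E3, E2, E1, Hd, HU]
  push_cast
  field_simp
  ring

private theorem chooseup1 (m : ℕ) : ((2*m+3).choose (2*m+2)) = 2*m+3 := by
  have : (2*m+2)+1 = 2*m+3 := by omega
  rw [← this, Nat.choose_succ_self_right]

set_option maxHeartbeats 1600000 in
private theorem rec_gg (x : ℤ) (m : ℕ) :
    (-((m:ℚ)+1)^3) * gg x m
      + ((2*(m:ℚ)+3)*((m:ℚ)^2+3*(m:ℚ)+3+2*(x:ℚ)^2+2*(x:ℚ))) * gg x (m+1)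
      + (-((m:ℚ)+2)^3) * gg x (m+2) = 0 := by
  have hg0 : gg x m = ∑ k ∈ range (m+1),
      (((m+k).choose (2*k) : ℕ) : ℚ) * (((2*k).choose k : ℕ) : ℚ) * uu x k := by
    unfold gg
    refine Finset.sum_congr rfl fun k _ => ?_
    push_cast
    ring
  have hg1 : gg x (m+1) = (∑ k ∈ range (m+1),
      (((m+1+k).choose (2*k) : ℕ) : ℚ) * (((2*k).choose k : ℕ) : ℚ) * uu x k)
      + (((2*m+2).choose (m+1) : ℕ) : ℚ) * uu x (m+1) := by
    unfold gg
    rw [Finset.sum_range_succ]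
    have i1 : m + 1 + (m+1) = 2*m+2 := by omega
    have i2 : 2*(m+1) = 2*m+2 := by omega
    have i3 : m + 1 + 1 = m + 2 := by omega
    rw [i1, i2, Nat.choose_self]
    push_cast
    ring
  have hg2 : gg x (m+2) = (∑ k ∈ range (m+1),
      (((m+2+k).choose (2*k) : ℕ) : ℚ) * (((2*k).choose k : ℕ) : ℚ) * uu x k)
      + (2*(m:ℚ)+3) * (((2*m+2).choose (m+1) : ℕ) : ℚ) * uu x (m+1)
      + (((2*m+4).choose (m+2) : ℕ) : ℚ) * uu x (m+2) := by
    unfold gg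
    rw [show m+2+1 = (m+1)+1+1 by omega, Finset.sum_range_succ, Finset.sum_range_succ]
    have i1 : m + 2 + (m+1) = 2*m+3 := by omega
    have i2 : 2*(m+1) = 2*m+2 := by omega
    have i3 : m + 2 + (m+2) = 2*m+4 := by omega
    have i4 : 2*(m+2) = 2*m+4 := by omega
    have i5 : (m+1)+1 = m+2 := by omega
    rw [i5, i1, i2, i3, i4, Nat.choose_self, chooseup1]
    push_cast
    ring
  have key : ∀ k ∈ range (m+1),
      (-((m:ℚ)+1)^3) * ((((m+k).choose (2*k) : ℕ) : ℚ) * (((2*k).choose k : ℕ) : ℚ) * uu x k)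
      + ((2*(m:ℚ)+3)*((m:ℚ)^2+3*(m:ℚ)+3+2*(x:ℚ)^2+2*(x:ℚ)))
          * ((((m+1+k).choose (2*k) : ℕ) : ℚ) * (((2*k).choose k : ℕ) : ℚ) * uu x k)
      + (-((m:ℚ)+2)^3) * ((((m+2+k).choose (2*k) : ℕ) : ℚ) * (((2*k).choose k : ℕ) : ℚ) * uu x k)
      = WW x m (k+1) - WW x m k := by
    intro k hk
    rw [mem_range] at hk
    exact gkey x m k (by omega)
  have tel : ∑ k ∈ range (m+1), (WW x m (k+1) - WW x m k) = WW x m (m+1) - WW x m 0 :=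
    Finset.sum_range_sub (WW x m) (m+1)
  have hsum := Finset.sum_congr rfl key
  rw [tel] at hsum
  have hW0 : WW x m 0 = 0 := by
    unfold WW uu
    simp [aa_zero, bb_zero]
    ring
  have hWm : WW x m (m+1) = (-(21+41*(m:ℚ)+27*(m:ℚ)^2+6*(m:ℚ)^3)
      + ((m:ℚ)+2)^3*(2*(m:ℚ)+3)) * (((2*m+2).choose (m+1) : ℕ) : ℚ) * uu x (m+1) := by
    unfold WW
    have i1 : m + (m+1) = 2*m+1 := by omega
    have i2 : 2*(m+1) = 2*m+2 := by omega
    have i3 : m + 1 + (m+1) = 2*m+2 := by omega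
    have i4 : m + 2 + (m+1) = 2*m+3 := by omega
    rw [i1, i2, i3, i4, Nat.choose_self, chooseup1, Nat.choose_eq_zero_of_lt (by omega)]
    push_cast
    ring
  have hbd : WW x m (m+1) - WW x m 0
      + ((2*(m:ℚ)+3)*((m:ℚ)^2+3*(m:ℚ)+3+2*(x:ℚ)^2+2*(x:ℚ)))
          * ((((2*m+2).choose (m+1) : ℕ) : ℚ) * uu x (m+1))
      + (-((m:ℚ)+2)^3) * ((2*(m:ℚ)+3) * (((2*m+2).choose (m+1) : ℕ) : ℚ) * uu x (m+1)
          + (((2*m+4).choose (m+2) : ℕ) : ℚ) * uu x (m+2)) = 0 := by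
    rw [hWm, hW0]
    have hC2 : (((2*m+4).choose (m+2) : ℕ) : ℚ)
        = (2*(m:ℚ)+3)*(2*(m:ℚ)+4)/((m:ℚ)+2)^2 * (((2*m+2).choose (m+1) : ℕ) : ℚ) := by
      have h := central_step (m+1)
      have i1 : 2*(m+1)+2 = 2*m+4 := by omega
      have i2 : (m+1)+1 = m+2 := by omega
      have i3 : 2*(m+1) = 2*m+2 := by omega
      rw [i1, i2, i3] at h
      push_cast at h
      have : ((m:ℚ)+2)^2 ≠ 0 := by positivity
      field_simp
      linear_combination h
    have hU2 : uu x (m+2) = ((x:ℚ)+2+m)*((x:ℚ)-1-m)/((m:ℚ)+2)^2 * uu x (m+1) := by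
      have h := huu x (m+1)
      rw [show (m+1)+1 = m+2 by omega] at h
      push_cast at h
      have : ((m:ℚ)+2)^2 ≠ 0 := by positivity
      field_simp
      linear_combination h
    rw [hC2, hU2]
    field_simp
    ring
  have hA : (-((m:ℚ)+1)^3) * (∑ k ∈ range (m+1),
        (((m+k).choose (2*k) : ℕ) : ℚ) * (((2*k).choose k : ℕ) : ℚ) * uu x k)
      + ((2*(m:ℚ)+3)*((m:ℚ)^2+3*(m:ℚ)+3+2*(x:ℚ)^2+2*(x:ℚ))) * (∑ k ∈ range (m+1),
        (((m+1+k).choose (2*k) : ℕ) : ℚ) * (((2*k).choose k : ℕ) : ℚ) * uu x k)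
      + (-((m:ℚ)+2)^3) * (∑ k ∈ range (m+1),
        (((m+2+k).choose (2*k) : ℕ) : ℚ) * (((2*k).choose k : ℕ) : ℚ) * uu x k)
      = WW x m (m+1) - WW x m 0 := by
    rw [Finset.mul_sum, Finset.mul_sum, Finset.mul_sum, ← hsum,
      ← Finset.sum_add_distrib, ← Finset.sum_add_distrib]
  rw [hg0, hg1, hg2]
  linear_combination hA + hbd

private theorem ffgg (x : ℤ) : ∀ m, ff x m = gg x m := by
  have base0 : ff x 0 = gg x 0 := by
    unfold ff gg uu
    simp [aa_zero, bb_zero]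
  have base1 : ff x 1 = gg x 1 := by
    unfold ff gg uu
    rw [Finset.sum_range_succ, Finset.sum_range_succ, Finset.sum_range_succ, Finset.sum_range_succ]
    norm_num [aa_zero, bb_zero, aa_one, bb_one]
    ring
  have step : ∀ m, ff x m = gg x m → ff x (m+1) = gg x (m+1) → ff x (m+2) = gg x (m+2) := by
    intro m h0 h1
    have hf := rec_ff x m
    have hg := rec_gg x m
    have hne : ((m:ℚ)+2)^3 ≠ 0 := by positivity
    refine mul_left_cancel₀ hne ?_
    linear_combination (-1 : ℚ) * hf + hg + (-((m:ℚ)+1)^3) * h0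
      + ((2*(m:ℚ)+3)*((m:ℚ)^2+3*(m:ℚ)+3+2*(x:ℚ)^2+2*(x:ℚ))) * h1
  have main : ∀ m, ff x m = gg x m ∧ ff x (m+1) = gg x (m+1) := by
    intro m
    induction m with
    | zero => exact ⟨base0, base1⟩
    | succ n ih => exact ⟨ih.2, step n ih.1 ih.2⟩
  exact fun m => (main m).1

private theorem cs2 (k : ℕ) :
    (((2*k+1).choose k : ℕ) : ℚ) * ((k:ℚ)+1) = (((2*k).choose k : ℕ) : ℚ) * (2*(k:ℚ)+1) := by
  have h := choose_top (2*k) k (by omega)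
  push_cast at h ⊢
  linear_combination h

private theorem skey (x : ℤ) (n k : ℕ) (hk : k ≤ n) :
    ((n:ℚ)+1) * (((n+1+k).choose (2*k+1) : ℕ) : ℚ) * (((2*k+1).choose k : ℕ) : ℚ)
      - (n:ℚ) * (((n+k).choose (2*k+1) : ℕ) : ℚ) * (((2*k+1).choose k : ℕ) : ℚ)
    = (2*(n:ℚ)+1) * (((n+k).choose (2*k) : ℕ) : ℚ) * (((2*k).choose k : ℕ) : ℚ) := by
  have nk1 : (2*(k:ℚ)+1) ≠ 0 := by positivity
  have nk2 : ((k:ℚ)+1) ≠ 0 := by positivity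
  have pasc : (((n+1+k).choose (2*k+1) : ℕ) : ℚ)
      = (((n+k).choose (2*k) : ℕ) : ℚ) + (((n+k).choose (2*k+1) : ℕ) : ℚ) := by
    have h : (n+1+k).choose (2*k+1) = (n+k).choose (2*k) + (n+k).choose (2*k+1) := by
      rw [show n+1+k = (n+k)+1 by omega]
      exact Nat.choose_succ_succ _ _
    exact_mod_cast congrArg (Nat.cast : ℕ → ℚ) h
  have hc2 : (((n+k).choose (2*k+1) : ℕ) : ℚ)
      = ((n:ℚ)-k)/(2*(k:ℚ)+1) * (((n+k).choose (2*k) : ℕ) : ℚ) := by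
    have h := choose_low (n+k) (2*k) (by omega)
    push_cast at h
    field_simp
    linear_combination h
  have hd2 : (((2*k+1).choose k : ℕ) : ℚ)
      = (2*(k:ℚ)+1)/((k:ℚ)+1) * (((2*k).choose k : ℕ) : ℚ) := by
    have h := cs2 k
    field_simp
    linear_combination h
  rw [pasc, hc2, hd2]
  field_simp
  ring


private noncomputable def RRq (x : ℤ) (n : ℕ) : ℚ :=
  ∑ k ∈ range n, (((n+k).choose (2*k+1) * (2*k+1).choose k : ℕ) : ℚ) * uu x k

private theorem SR (x : ℤ) : ∀ n, ∑ k ∈ range n, (2*(k:ℚ)+1) * ff x k = (n:ℚ) * RRq x n := by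
  intro n
  induction n with
  | zero => simp [RRq]
  | succ n ih =>
    rw [Finset.sum_range_succ, ih, ffgg x n]
    have hz : (((n+n).choose (2*n+1) : ℕ) : ℚ) = 0 := by
      rw [Nat.choose_eq_zero_of_lt (by omega)]
      simp
    have hR0 : ∑ k ∈ range (n+1),
        (n:ℚ) * (((n+k).choose (2*k+1) : ℕ) : ℚ) * (((2*k+1).choose k : ℕ) : ℚ) * uu x k
        = (n:ℚ) * RRq x n := by
      rw [Finset.sum_range_succ, hz]
      unfold RRq
      rw [Finset.mul_sum]
      rw [show (n:ℚ) * 0 * (((2*n+1).choose n : ℕ) : ℚ) * uu x n = 0 by ring, add_zero]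
      refine Finset.sum_congr rfl fun k _ => ?_
      push_cast
      ring
    have hR1 : ((n:ℚ)+1) * RRq x (n+1) = ∑ k ∈ range (n+1),
        ((n:ℚ)+1) * (((n+1+k).choose (2*k+1) : ℕ) : ℚ) * (((2*k+1).choose k : ℕ) : ℚ) * uu x k := by
      unfold RRq
      rw [Finset.mul_sum]
      refine Finset.sum_congr rfl fun k _ => ?_
      push_cast
      ring
    have hgg : (2*(n:ℚ)+1) * gg x n = ∑ k ∈ range (n+1),
        (2*(n:ℚ)+1) * (((n+k).choose (2*k) : ℕ) : ℚ) * (((2*k).choose k : ℕ) : ℚ) * uu x k := by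
      unfold gg
      rw [Finset.mul_sum]
      refine Finset.sum_congr rfl fun k _ => ?_
      push_cast
      ring
    have key : ∀ k ∈ range (n+1),
        ((n:ℚ)+1) * (((n+1+k).choose (2*k+1) : ℕ) : ℚ) * (((2*k+1).choose k : ℕ) : ℚ) * uu x k
        = (n:ℚ) * (((n+k).choose (2*k+1) : ℕ) : ℚ) * (((2*k+1).choose k : ℕ) : ℚ) * uu x k
          + (2*(n:ℚ)+1) * (((n+k).choose (2*k) : ℕ) : ℚ) * (((2*k).choose k : ℕ) : ℚ) * uu x k := by
      intro k hk
      rw [mem_range] at hk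
      have h := skey x n k (by omega)
      linear_combination (uu x k) * h
    have : ((n:ℚ)+1) * RRq x (n+1)
        = (n:ℚ) * RRq x n + (2*(n:ℚ)+1) * gg x n := by
      rw [hR1, Finset.sum_congr rfl key, Finset.sum_add_distrib, hR0, hgg]
    push_cast
    linarith [this]

theorem stmt_3 (n : ℕ) (hn : 0 < n) (x : ℤ) :
    (n : ℤ) ∣ ∑ k ∈ range n, (2 * (k : ℤ) + 1) *
        ∑ j ∈ range (k + 1),
          (Ring.choose (-x - 1) j) ^ 2 * (Ring.choose x (k - j)) ^ 2 := by
  have hcast : ((∑ k ∈ range n, (2 * (k : ℤ) + 1) *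
        ∑ j ∈ range (k + 1),
          (Ring.choose (-x - 1) j) ^ 2 * (Ring.choose x (k - j)) ^ 2 : ℤ) : ℚ)
      = ∑ k ∈ range n, (2*(k:ℚ)+1) * ff x k := by
    push_cast
    refine Finset.sum_congr rfl fun k _ => ?_
    unfold ff aa bb
    push_cast
    first
    | rfl
    | ring
    | (refine congrArg _ (Finset.sum_congr rfl fun j _ => ?_); push_cast; ring)
  refine ⟨∑ k ∈ range n, (((n+k).choose (2*k+1) * (2*k+1).choose k : ℕ) : ℤ)
      * ((-1)^k * Ring.choose (-x-1) k * Ring.choose x k), ?_⟩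
  have hRI : ((∑ k ∈ range n, (((n+k).choose (2*k+1) * (2*k+1).choose k : ℕ) : ℤ)
      * ((-1)^k * Ring.choose (-x-1) k * Ring.choose x k) : ℤ) : ℚ) = RRq x n := by
    unfold RRq uu aa bb
    push_cast
    try rfl
    try (refine Finset.sum_congr rfl fun k _ => ?_; ring)
  have hq : ((∑ k ∈ range n, (2 * (k : ℤ) + 1) *
        ∑ j ∈ range (k + 1),
          (Ring.choose (-x - 1) j) ^ 2 * (Ring.choose x (k - j)) ^ 2 : ℤ) : ℚ)
      = (((n : ℤ) * ∑ k ∈ range n, (((n+k).choose (2*k+1) * (2*k+1).choose k : ℕ) : ℤ)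
      * ((-1)^k * Ring.choose (-x-1) k * Ring.choose x k) : ℤ) : ℚ) := by
    rw [hcast, SR x n, ← hRI]
    push_cast
    ring
  exact_mod_cast hq
end

section
/- Let l and n be positive integers and ε = ±1. Define the multi-variable Schmidt polynomial S_k(x_0,…,x_k) = ∑_{i=0}^{k} C(k+i, 2i)·C(2i, i)·x_i. Then in the polynomial ∑_{k=0}^{n-1} ε^k (2k+1)^{2l-1} · S_k(x_0,…,x_k), the coefficient of each x_i is divisible by n. -/
open Finset

-- L1 : (k+1) * C(k+j+1, j) = (k+j+1) * C(k+j, j)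
lemma L1 (k j : ℕ) : ((k:ℤ)+1) * ((k+j+1).choose j) = ((k:ℤ)+j+1) * ((k+j).choose j) := by
  have h := Nat.add_one_mul_choose_eq (k+j) k
  have h2 : (k+j).choose k = (k+j).choose j := Nat.choose_symm_add
  have h3 : (k+j+1).choose (k+1) = (k+1+j).choose (k+1) := by ring_nf
  rw [h2] at h
  have hZ := congrArg (Nat.cast (R := ℤ)) h
  push_cast [Nat.succ_eq_add_one, h3, Nat.choose_symm_add] at hZ
  have h4 : (k+1+j) = (k+j+1) := by ring
  rw [h4] at hZ
  linarith

-- L2 : (j+1) * C(k, j+1) = (k - j) * C(k, j)   (over ℤ)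
lemma L2 (k j : ℕ) : ((j:ℤ)+1) * (k.choose (j+1)) = ((k:ℤ) - j) * (k.choose j) := by
  rcases le_or_gt j k with h | h
  · have hZ := congrArg (Nat.cast (R := ℤ)) (Nat.choose_succ_right_eq k j)
    push_cast [h] at hZ
    linarith
  · rw [Nat.choose_eq_zero_of_lt h, Nat.choose_eq_zero_of_lt (h.trans (Nat.lt_succ_self j))]
    simp

-- L3 : k * C(k-1, j) = (j+1) * C(k, j+1)
lemma L3 (k j : ℕ) : (k:ℤ) * ((k-1).choose j) = ((j:ℤ)+1) * (k.choose (j+1)) := by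
  cases k with
  | zero => simp
  | succ m =>
    have hZ := congrArg (Nat.cast (R := ℤ)) (Nat.add_one_mul_choose_eq m j)
    simp only [Nat.succ_sub_one]
    push_cast [Nat.succ_eq_add_one] at hZ
    push_cast
    linarith

-- L4 : (k+i+1) * C(k+i, i) = (i+1) * C(k+i+1, i+1)
lemma L4 (k i : ℕ) : ((k:ℤ)+i+1) * ((k+i).choose i) = ((i:ℤ)+1) * ((k+i+1).choose (i+1)) := by
  have hZ := congrArg (Nat.cast (R := ℤ)) (Nat.add_one_mul_choose_eq (k+i) i)
  push_cast [Nat.succ_eq_add_one] at hZ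
  linarith


-- closed form, ε = 1
lemma sumA (j n : ℕ) :
    ∑ k ∈ range n, (2*(k:ℤ)+1) * ((k+j).choose j) * (k.choose j)
      = (n:ℤ) * ((n+j).choose j) * (n.choose (j+1)) := by
  induction n with
  | zero => simp
  | succ n ih =>
    rw [sum_range_succ, ih]
    have h1 := L1 n j
    have h2 := L2 n j
    have hp : (((n+1).choose (j+1) : ℕ) : ℤ) = (n.choose j : ℤ) + (n.choose (j+1) : ℤ) := by
      exact_mod_cast congrArg (Nat.cast (R := ℤ)) (Nat.choose_succ_succ' n j)
    push_cast
    rw [show n+1+j = n+j+1 from by omega]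
    linear_combination (-((((n+j).choose j : ℕ)):ℤ)) * h2 - ((n:ℤ)+j+1)*(((n+j).choose j : ℕ):ℤ)*hp - (((n+1).choose (j+1) : ℕ):ℤ) * h1

-- closed form, ε = -1
lemma sumB (j n : ℕ) :
    ∑ k ∈ range n, (-1:ℤ)^k * (2*(k:ℤ)+1) * ((k+j).choose j) * (k.choose j)
      = (-1:ℤ)^(n+1) * ((n:ℤ) * ((n+j).choose j) * ((n-1).choose j)) := by
  induction n with
  | zero => simp
  | succ n ih =>
    rw [sum_range_succ, ih]
    have h1 := L1 n j
    have h2 := L2 n j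
    have h3 := L3 n j
    have hc : ((n+1:ℕ) - 1) = n := by omega
    rw [hc]
    push_cast
    rw [show n+1+j = n+j+1 from by omega]
    linear_combination (-(-1:ℤ)^n * ((n.choose j : ℕ):ℤ)) * h1 + (-(-1:ℤ)^n * (((n+j).choose j : ℕ):ℤ)) * h3 + (-(-1:ℤ)^n * (((n+j).choose j : ℕ):ℤ)) * h2

-- recurrence in i
lemma lemC (k i : ℕ) :
    (2*(k:ℤ)+1)^2 * ((k+i).choose i) * (k.choose i)
      = 4*((i:ℤ)+1)^2 * ((k+(i+1)).choose (i+1)) * (k.choose (i+1))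
        + (2*(i:ℤ)+1)^2 * ((k+i).choose i) * (k.choose i) := by
  have h2 := L2 k i
  have h4 := L4 k i
  have : (k + (i+1)) = (k+i+1) := by ring
  rw [this]
  linear_combination (-4*((k:ℤ)+i+1)*(((k+i).choose i : ℕ):ℤ)) * h2 + (4*((i:ℤ)+1)*((k.choose (i+1) : ℕ):ℤ)) * h4

-- product of binomials
lemma chooseProd (k i : ℕ) :
    (k+i).choose (2*i) * (2*i).choose i = (k+i).choose i * k.choose i := by
  rcases le_or_gt i k with h | h
  · have e1 : (2*i).choose i * (i.factorial * i.factorial) = (2*i).factorial := by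
      have := Nat.choose_mul_factorial_mul_factorial (show i ≤ 2*i by omega)
      have hs : 2*i - i = i := by omega
      rw [hs] at this; linarith [this]
    have e2 : (k+i).choose (2*i) * ((2*i).factorial * (k-i).factorial) = (k+i).factorial := by
      have := Nat.choose_mul_factorial_mul_factorial (show 2*i ≤ k+i by omega)
      have hs : k + i - 2*i = k - i := by omega
      rw [hs] at this; linarith [this]
    have e3 : (k+i).choose i * (i.factorial * k.factorial) = (k+i).factorial := by
      have := Nat.choose_mul_factorial_mul_factorial (show i ≤ k+i by omega)
      have hs : k + i - i = k := by omega
      rw [hs] at this; linarith [this]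
    have e4 : k.choose i * (i.factorial * (k-i).factorial) = k.factorial := by
      have := Nat.choose_mul_factorial_mul_factorial h
      linarith [this]
    have hpos : 0 < i.factorial * i.factorial * (k-i).factorial :=
      Nat.mul_pos (Nat.mul_pos i.factorial_pos i.factorial_pos) (k-i).factorial_pos
    apply Nat.eq_of_mul_eq_mul_right hpos
    calc (k+i).choose (2*i) * (2*i).choose i * (i.factorial * i.factorial * (k-i).factorial)
        = (k+i).choose (2*i) * (((2*i).choose i * (i.factorial * i.factorial)) * (k-i).factorial) := by ring
      _ = (k+i).choose (2*i) * ((2*i).factorial * (k-i).factorial) := by rw [e1]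
      _ = (k+i).factorial := e2
      _ = (k+i).choose i * (i.factorial * k.factorial) := e3.symm
      _ = (k+i).choose i * (i.factorial * (k.choose i * (i.factorial * (k-i).factorial))) := by rw [e4]
      _ = (k+i).choose i * k.choose i * (i.factorial * i.factorial * (k-i).factorial) := by ring
  · rw [Nat.choose_eq_zero_of_lt (show k + i < 2*i by omega),
       Nat.choose_eq_zero_of_lt h]
    simp

lemma key_s6 (n : ℕ) (ε : ℤ) (hε : ε = 1 ∨ ε = -1) (m i : ℕ) :
    (n:ℤ) ∣ ∑ k ∈ range n,
      ε^k * (2*(k:ℤ)+1)^(2*m+1) * ((k+i).choose i : ℤ) * (k.choose i : ℤ) := by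
  induction m generalizing i with
  | zero =>
    rcases hε with rfl | rfl
    · simp only [one_pow, one_mul, show 2*0+1 = 1 from rfl, pow_one]
      rw [sumA]
      exact ⟨((n+i).choose i : ℤ) * (n.choose (i+1) : ℤ), by ring⟩
    · simp only [show 2*0+1 = 1 from rfl, pow_one]
      rw [sumB]
      exact ⟨(-1:ℤ)^(n+1) * (((n+i).choose i : ℤ) * ((n-1).choose i : ℤ)), by ring⟩
  | succ m ih =>
    have hsum : ∑ k ∈ range n,
        ε^k * (2*(k:ℤ)+1)^(2*(m+1)+1) * ((k+i).choose i : ℤ) * (k.choose i : ℤ)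
      = 4*((i:ℤ)+1)^2 * (∑ k ∈ range n,
          ε^k * (2*(k:ℤ)+1)^(2*m+1) * ((k+(i+1)).choose (i+1) : ℤ) * (k.choose (i+1) : ℤ))
        + (2*(i:ℤ)+1)^2 * (∑ k ∈ range n,
          ε^k * (2*(k:ℤ)+1)^(2*m+1) * ((k+i).choose i : ℤ) * (k.choose i : ℤ)) := by
      rw [mul_sum, mul_sum, ← sum_add_distrib]
      refine sum_congr rfl fun k _ => ?_
      have hc := lemC k i
      linear_combination (ε^k * (2*(k:ℤ)+1)^(2*m+1)) * hc
    rw [hsum]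
    exact dvd_add ((ih (i+1)).mul_left _) ((ih i).mul_left _)

theorem stmt_6 (l n : ℕ) (hl : 0 < l) (hn : 0 < n) (ε : ℤ) (hε : ε = 1 ∨ ε = -1)
    (i : ℕ) (hi : i ≤ n - 1) :
    (n : ℤ) ∣ ∑ k ∈ Finset.Ico i n,
        ε ^ k * (2 * (k : ℤ) + 1) ^ (2 * l - 1) *
          ((k + i).choose (2 * i) : ℤ) * ((2 * i).choose i : ℤ) := by
  obtain ⟨m, rfl⟩ : ∃ m, l = m + 1 := ⟨l - 1, by omega⟩
  have hin : i ≤ n := by omega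
  have hexp : 2 * (m+1) - 1 = 2*m+1 := by omega
  have h1 : ∑ k ∈ Finset.Ico i n,
      ε ^ k * (2 * (k : ℤ) + 1) ^ (2 * (m+1) - 1) *
        ((k + i).choose (2 * i) : ℤ) * ((2 * i).choose i : ℤ)
    = ∑ k ∈ range n,
      ε^k * (2*(k:ℤ)+1)^(2*m+1) * ((k+i).choose i : ℤ) * (k.choose i : ℤ) := by
    rw [Finset.sum_Ico_eq_sub _ hin]
    have h0 : ∑ k ∈ range i,
        ε ^ k * (2 * (k : ℤ) + 1) ^ (2 * (m+1) - 1) *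
          ((k + i).choose (2 * i) : ℤ) * ((2 * i).choose i : ℤ) = 0 := by
      refine sum_eq_zero fun k hk => ?_
      rw [mem_range] at hk
      rw [Nat.choose_eq_zero_of_lt (show k + i < 2*i by omega)]
      simp
    rw [h0, sub_zero]
    refine sum_congr rfl fun k _ => ?_
    rw [hexp]
    have hcp : (((k+i).choose (2*i) : ℕ) : ℤ) * (((2*i).choose i : ℕ) : ℤ)
        = (((k+i).choose i : ℕ) : ℤ) * ((k.choose i : ℕ) : ℤ) := by
      exact_mod_cast congrArg (Nat.cast (R := ℤ)) (chooseProd k i)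
    linear_combination (ε^k * (2*(k:ℤ)+1)^(2*m+1)) * hcp
  rw [h1]
  exact key_s6 n ε hε m i
end

section
/- Let l and n be positive integers and i a non-negative integer with i ≤ n-1. Then n divides ∑_{k=i}^{n-1} (2k+1)^{2l-1} · C(k+i, 2i) · C(2i, i). -/
open Finset

/-- Hockey stick with shift: `∑_{k<n} C(k+a, c) + C(a, c+1) = C(n+a, c+1)`. -/
lemma hockey (a c : ℕ) : ∀ n : ℕ,
    (∑ k ∈ Finset.range n, (k + a).choose c) + a.choose (c + 1) = (n + a).choose (c + 1) := by
  intro n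
  induction n with
  | zero => simp
  | succ n ih =>
    rw [Finset.sum_range_succ]
    have h := Nat.choose_succ_succ (n + a) c
    simp only [Nat.succ_eq_add_one] at h
    have e : n + 1 + a = n + a + 1 := by omega
    rw [e, h]
    omega

/-- `(2i+1)·C(k+i, 2i+1) = (k-i)·C(k+i, 2i)` over ℤ. -/
lemma idB (k i : ℕ) :
    (2 * (i : ℤ) + 1) * ((k + i).choose (2 * i + 1) : ℤ) =
      ((k : ℤ) - i) * ((k + i).choose (2 * i) : ℤ) := by
  rcases le_or_gt i k with h | h
  · have hnat := Nat.choose_succ_right_eq (k + i) (2 * i)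
    have hsub : k + i - 2 * i = k - i := by omega
    rw [hsub] at hnat
    have := congrArg (fun m : ℕ => (m : ℤ)) hnat
    push_cast at this
    have hki : ((k : ℤ) - i) = ((k - i : ℕ) : ℤ) := by
      push_cast [Nat.cast_sub h]; ring
    rw [hki]
    linarith [this]
  · have h1 : (k + i).choose (2 * i + 1) = 0 := Nat.choose_eq_zero_of_lt (by omega)
    have h2 : (k + i).choose (2 * i) = 0 := Nat.choose_eq_zero_of_lt (by omega)
    rw [h1, h2]
    simp

/-- `(2k+1)·C(k+i,2i) = (2i+1)·(C(k+i+1,2i+1) + C(k+i,2i+1))` over ℤ. -/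
lemma idC (k i : ℕ) :
    (2 * (k : ℤ) + 1) * ((k + i).choose (2 * i) : ℤ) =
      (2 * (i : ℤ) + 1) * (((k + i + 1).choose (2 * i + 1) : ℤ) +
        ((k + i).choose (2 * i + 1) : ℤ)) := by
  have h1 := Nat.add_one_mul_choose_eq (k + i) (2 * i)
  have h1' := congrArg (fun m : ℕ => (m : ℤ)) h1
  push_cast at h1'
  have h2 := idB k i
  -- h1' : (k+i+1) * C(k+i,2i) = C(k+i+1,2i+1) * (2i+1)
  linarith [h1', h2]

/-- `(2i+1)(2i+2)·C(k+i+1, 2i+2) = (k+i+1)(k-i)·C(k+i, 2i)` over ℤ. -/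
lemma idD (k i : ℕ) :
    (2 * (i : ℤ) + 1) * (2 * (i : ℤ) + 2) * ((k + i + 1).choose (2 * i + 2) : ℤ) =
      ((k : ℤ) + i + 1) * ((k : ℤ) - i) * ((k + i).choose (2 * i) : ℤ) := by
  have h1 := Nat.add_one_mul_choose_eq (k + i) (2 * i + 1)
  have h1' := congrArg (fun m : ℕ => (m : ℤ)) h1
  push_cast at h1'
  have h2 := idB k i
  -- h1' : (k+i+1) * C(k+i,2i+1) = C(k+i+1,2i+2) * (2i+2)
  nlinarith [h1', h2]

/-- `(i+1)²·C(2i+2, i+1) = (2i+1)(2i+2)·C(2i, i)` over ℤ. -/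
lemma idE (i : ℕ) :
    ((i : ℤ) + 1) ^ 2 * ((2 * i + 2).choose (i + 1) : ℤ) =
      (2 * (i : ℤ) + 1) * (2 * (i : ℤ) + 2) * ((2 * i).choose i : ℤ) := by
  have h1 := Nat.add_one_mul_choose_eq (2 * i + 1) i
  have h2 := Nat.add_one_mul_choose_eq (2 * i) i
  have hsymm : (2 * i + 1).choose (i + 1) = (2 * i + 1).choose i := by
    have := Nat.choose_symm (show i + 1 ≤ 2 * i + 1 by omega)
    have hsub : 2 * i + 1 - (i + 1) = i := by omega
    rw [hsub] at this
    omega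
  rw [hsymm] at h2
  have h1' := congrArg (fun m : ℕ => (m : ℤ)) h1
  have h2' := congrArg (fun m : ℕ => (m : ℤ)) h2
  push_cast at h1' h2'
  nlinarith [h1', h2']

/-- `(i+1)·(C(n+i, 2i+2) + C(n+i+1, 2i+2)) = n·C(n+i, 2i+1)` over ℤ. -/
lemma idF (n i : ℕ) :
    ((i : ℤ) + 1) * (((n + i).choose (2 * i + 2) : ℤ) + ((n + i + 1).choose (2 * i + 2) : ℤ)) =
      (n : ℤ) * ((n + i).choose (2 * i + 1) : ℤ) := by
  have hpascal : ((n + i + 1).choose (2 * i + 2) : ℤ) =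
      ((n + i).choose (2 * i + 1) : ℤ) + ((n + i).choose (2 * i + 2) : ℤ) := by
    have := Nat.choose_succ_succ (n + i) (2 * i + 1)
    exact_mod_cast congrArg (fun m : ℕ => (m : ℤ)) this
  have hkey : 2 * ((i : ℤ) + 1) * ((n + i).choose (2 * i + 2) : ℤ) =
      ((n : ℤ) - i - 1) * ((n + i).choose (2 * i + 1) : ℤ) := by
    rcases le_or_gt (i + 1) n with h | h
    · have hnat := Nat.choose_succ_right_eq (n + i) (2 * i + 1)
      have hsub : n + i - (2 * i + 1) = n - i - 1 := by omega
      rw [hsub] at hnat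
      have hnat' := congrArg (fun m : ℕ => (m : ℤ)) hnat
      push_cast at hnat'
      have hcast : ((n - i - 1 : ℕ) : ℤ) = (n : ℤ) - i - 1 := by
        have : ((n - i - 1 : ℕ) : ℤ) = ((n : ℤ)) - ((i : ℤ)) - 1 := by
          omega
        exact this
      rw [hcast] at hnat'
      linarith [hnat']
    · have h1 : (n + i).choose (2 * i + 2) = 0 := Nat.choose_eq_zero_of_lt (by omega)
      have h2 : (n + i).choose (2 * i + 1) = 0 := Nat.choose_eq_zero_of_lt (by omega)
      rw [h1, h2]
      simp
  linear_combination ((i : ℤ) + 1) * hpascal + hkey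

/-- The key step identity:
`(2k+1)²·C(k+i,2i)·C(2i,i) = (2i+2)²·C(k+i+1,2i+2)·C(2i+2,i+1) + (2i+1)²·C(k+i,2i)·C(2i,i)`. -/
lemma idStep (k i : ℕ) :
    (2 * (k : ℤ) + 1) ^ 2 * ((k + i).choose (2 * i) : ℤ) * ((2 * i).choose i : ℤ) =
      (2 * (i : ℤ) + 2) ^ 2 * ((k + i + 1).choose (2 * i + 2) : ℤ) *
        ((2 * i + 2).choose (i + 1) : ℤ) +
      (2 * (i : ℤ) + 1) ^ 2 * ((k + i).choose (2 * i) : ℤ) * ((2 * i).choose i : ℤ) := by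
  have hD := idD k i
  have hE := idE i
  linear_combination (-4 * ((k + i + 1).choose (2 * i + 2) : ℤ)) * hE +
    (-4 * ((2 * i).choose i : ℤ)) * hD

/-- Base case: divisibility for the linear weight. -/
lemma base_case (n i : ℕ) :
    (n : ℤ) ∣ ∑ k ∈ Finset.range n,
      (2 * (k : ℤ) + 1) * ((k + i).choose (2 * i) : ℤ) * ((2 * i).choose i : ℤ) := by
  have hsum : ∑ k ∈ Finset.range n,
      (2 * (k : ℤ) + 1) * ((k + i).choose (2 * i) : ℤ) * ((2 * i).choose i : ℤ) =
      (2 * (i : ℤ) + 1) * ((2 * i).choose i : ℤ) *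
        ((∑ k ∈ Finset.range n, ((k + i + 1).choose (2 * i + 1) : ℤ)) +
         (∑ k ∈ Finset.range n, ((k + i).choose (2 * i + 1) : ℤ))) := by
    rw [mul_add, Finset.mul_sum, Finset.mul_sum, ← Finset.sum_add_distrib]
    apply Finset.sum_congr rfl
    intro k _
    have := idC k i
    ring_nf
    ring_nf at this
    nlinarith [this]
  -- hockey stick evaluations
  have hh1 : (∑ k ∈ Finset.range n, (k + i).choose (2 * i + 1)) = (n + i).choose (2 * i + 2) := by
    have h := hockey i (2 * i + 1) n
    rw [show 2 * i + 1 + 1 = 2 * i + 2 by ring] at h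
    have hz : i.choose (2 * i + 2) = 0 := Nat.choose_eq_zero_of_lt (by omega)
    omega
  have hh2 : (∑ k ∈ Finset.range n, (k + (i + 1)).choose (2 * i + 1)) =
      (n + (i + 1)).choose (2 * i + 2) := by
    have h := hockey (i + 1) (2 * i + 1) n
    rw [show 2 * i + 1 + 1 = 2 * i + 2 by ring] at h
    have hz : (i + 1).choose (2 * i + 2) = 0 := Nat.choose_eq_zero_of_lt (by omega)
    omega
  have hh2' : (∑ k ∈ Finset.range n, ((k + i + 1).choose (2 * i + 1) : ℤ)) =
      ((n + i + 1).choose (2 * i + 2) : ℤ) := by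
    have : (∑ k ∈ Finset.range n, (k + i + 1).choose (2 * i + 1)) =
        (n + i + 1).choose (2 * i + 2) := by
      have := hh2
      convert this using 2 <;> ring_nf
    exact_mod_cast congrArg (fun m : ℕ => (m : ℤ)) this
  have hh1' : (∑ k ∈ Finset.range n, ((k + i).choose (2 * i + 1) : ℤ)) =
      ((n + i).choose (2 * i + 2) : ℤ) := by
    exact_mod_cast congrArg (fun m : ℕ => (m : ℤ)) hh1
  rw [hsum, hh1', hh2']
  -- use (i+1) ∣ C(2i,i)
  obtain ⟨c, hc⟩ := Nat.succ_dvd_centralBinom i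
  have hc' : ((2 * i).choose i : ℤ) = ((i : ℤ) + 1) * (c : ℤ) := by
    have : i.centralBinom = (2 * i).choose i := Nat.centralBinom_eq_two_mul_choose i
    rw [this] at hc
    exact_mod_cast congrArg (fun m : ℕ => (m : ℤ)) hc
  have hF := idF n i
  refine ⟨(2 * (i : ℤ) + 1) * (c : ℤ) * ((n + i).choose (2 * i + 1) : ℤ), ?_⟩
  rw [hc']
  calc (2 * (i : ℤ) + 1) * (((i : ℤ) + 1) * (c : ℤ)) *
        (((n + i + 1).choose (2 * i + 2) : ℤ) + ((n + i).choose (2 * i + 2) : ℤ))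
      = (2 * (i : ℤ) + 1) * (c : ℤ) *
        (((i : ℤ) + 1) * (((n + i).choose (2 * i + 2) : ℤ) +
          ((n + i + 1).choose (2 * i + 2) : ℤ))) := by ring
    _ = (2 * (i : ℤ) + 1) * (c : ℤ) * ((n : ℤ) * ((n + i).choose (2 * i + 1) : ℤ)) := by
        rw [hF]
    _ = (n : ℤ) * ((2 * (i : ℤ) + 1) * (c : ℤ) * ((n + i).choose (2 * i + 1) : ℤ)) := by ring

/-- Main divisibility, by induction on `l`. -/
lemma main_dvd : ∀ l : ℕ, 1 ≤ l → ∀ i n : ℕ,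
    (n : ℤ) ∣ ∑ k ∈ Finset.range n,
      (2 * (k : ℤ) + 1) ^ (2 * l - 1) * ((k + i).choose (2 * i) : ℤ) *
        ((2 * i).choose i : ℤ) := by
  intro l hl
  induction l, hl using Nat.le_induction with
  | base =>
    intro i n
    have := base_case n i
    simpa using this
  | succ l hl ih =>
    intro i n
    have hexp : 2 * (l + 1) - 1 = (2 * l - 1) + 2 := by omega
    have hsplit : ∑ k ∈ Finset.range n,
        (2 * (k : ℤ) + 1) ^ (2 * (l + 1) - 1) * ((k + i).choose (2 * i) : ℤ) *
          ((2 * i).choose i : ℤ) =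
        (2 * (i : ℤ) + 2) ^ 2 * (∑ k ∈ Finset.range n,
          (2 * (k : ℤ) + 1) ^ (2 * l - 1) * ((k + (i + 1)).choose (2 * (i + 1)) : ℤ) *
            ((2 * (i + 1)).choose (i + 1) : ℤ)) +
        (2 * (i : ℤ) + 1) ^ 2 * (∑ k ∈ Finset.range n,
          (2 * (k : ℤ) + 1) ^ (2 * l - 1) * ((k + i).choose (2 * i) : ℤ) *
            ((2 * i).choose i : ℤ)) := by
      rw [Finset.mul_sum, Finset.mul_sum, ← Finset.sum_add_distrib]
      apply Finset.sum_congr rfl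
      intro k _
      rw [hexp, pow_add]
      have hstep := idStep k i
      have e1 : k + (i + 1) = k + i + 1 := by ring
      have e2 : 2 * (i + 1) = 2 * i + 2 := by ring
      have e3 : (2 * (i : ℤ) + 2) = 2 * ((i : ℤ) + 1) := by ring
      rw [e1, e2]
      push_cast
      linear_combination (2 * (k : ℤ) + 1) ^ (2 * l - 1) * hstep
    rw [hsplit]
    exact dvd_add (Dvd.dvd.mul_left (ih (i + 1) n) _) (Dvd.dvd.mul_left (ih i n) _)

theorem stmt_7 (l n : ℕ) (hl : 0 < l) (hn : 0 < n) (i : ℕ) (hi : i ≤ n - 1) :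
    (n : ℤ) ∣ ∑ k ∈ Finset.Ico i n,
        (2 * (k : ℤ) + 1) ^ (2 * l - 1) *
          ((k + i).choose (2 * i) : ℤ) * ((2 * i).choose i : ℤ) := by
  have hsub : Finset.Ico i n ⊆ Finset.range n := by
    intro k hk
    simp only [Finset.mem_Ico] at hk
    exact Finset.mem_range.mpr hk.2
  have hzero : ∀ k ∈ Finset.range n, k ∉ Finset.Ico i n →
      (2 * (k : ℤ) + 1) ^ (2 * l - 1) * ((k + i).choose (2 * i) : ℤ) *
        ((2 * i).choose i : ℤ) = 0 := by
    intro k hk hk'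
    simp only [Finset.mem_range] at hk
    simp only [Finset.mem_Ico, not_and, not_lt] at hk'
    have hki : k < i := by
      by_contra h
      push_neg at h
      exact absurd (hk' h) (by omega)
    have : (k + i).choose (2 * i) = 0 := Nat.choose_eq_zero_of_lt (by omega)
    rw [this]
    simp
  rw [Finset.sum_subset hsub hzero]
  exact main_dvd l hl i n
end

section
/- Let l and n be positive integers and i a non-negative integer with i ≤ n-1. Then n divides ∑_{k=i}^{n-1} (-1)^k (2k+1)^{2l-1} · C(k+i, 2i) · C(2i, i). -/
open Finset

namespace Stmt8Aux
open Nat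

-- key recursion
lemma keyA (k i : ℕ) :
    (2 * (k : ℤ) + 1) ^ 2 * ((k + i).choose (2 * i) : ℤ) * ((2 * i).choose i : ℤ)
      = 4 * ((i : ℤ) + 1) ^ 2 * ((k + (i + 1)).choose (2 * (i + 1)) : ℤ)
          * ((2 * (i + 1)).choose (i + 1) : ℤ)
        + (2 * (i : ℤ) + 1) ^ 2 * ((k + i).choose (2 * i) : ℤ) * ((2 * i).choose i : ℤ) := by
  rcases lt_or_ge k i with hk | hk
  · have h1 : (k + i).choose (2 * i) = 0 := Nat.choose_eq_zero_of_lt (by omega)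
    have h2 : (k + (i + 1)).choose (2 * (i + 1)) = 0 := Nat.choose_eq_zero_of_lt (by omega)
    rw [h1, h2]; push_cast; ring
  · have a1 : (k + i + 1) * (k + i).choose (2 * i)
        = (k + i + 1).choose (2 * i + 1) * (2 * i + 1) := Nat.add_one_mul_choose_eq (k + i) (2 * i)
    have a2 : (k + i + 1).choose (2 * i + 2) * (2 * i + 2)
        = (k + i + 1).choose (2 * i + 1) * (k - i) := by
      have h := Nat.choose_succ_right_eq (k + i + 1) (2 * i + 1)
      rwa [show k + i + 1 - (2 * i + 1) = k - i by omega] at h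
    have a3 : (i + 1) * ((i + 1) * (2 * i + 2).choose (i + 1))
        = (2 * i + 2) * ((2 * i + 1) * (2 * i).choose i) := by
      have b2 : (2 * i + 1) * (2 * i).choose i
          = (2 * i + 1).choose (i + 1) * (i + 1) := Nat.add_one_mul_choose_eq (2 * i) i
      have c1 : (2 * i + 2) * (2 * i + 1).choose i
          = (2 * i + 2).choose (i + 1) * (i + 1) := Nat.add_one_mul_choose_eq (2 * i + 1) i
      have c2 : (2 * i + 1).choose (i + 1) = (2 * i + 1).choose i := Nat.choose_symm_half i
      calc (i + 1) * ((i + 1) * (2 * i + 2).choose (i + 1))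
          = (i + 1) * ((2 * i + 2).choose (i + 1) * (i + 1)) := by ring
        _ = (i + 1) * ((2 * i + 2) * (2 * i + 1).choose i) := by rw [c1]
        _ = (2 * i + 2) * ((2 * i + 1).choose (i + 1) * (i + 1)) := by rw [c2]; ring
        _ = (2 * i + 2) * ((2 * i + 1) * (2 * i).choose i) := by rw [← b2]
    have hki : ((k - i : ℕ) : ℤ) = (k : ℤ) - i := by
      push_cast [Nat.cast_sub hk]; ring
    have a1' : ((k : ℤ) + i + 1) * ((k + i).choose (2 * i) : ℤ)
        = ((k + i + 1).choose (2 * i + 1) : ℤ) * (2 * (i : ℤ) + 1) := by exact_mod_cast a1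
    have a2' : ((k + i + 1).choose (2 * i + 2) : ℤ) * (2 * (i : ℤ) + 2)
        = ((k + i + 1).choose (2 * i + 1) : ℤ) * ((k : ℤ) - i) := by
      rw [← hki]; exact_mod_cast a2
    have a3' : ((i : ℤ) + 1) * (((i : ℤ) + 1) * ((2 * i + 2).choose (i + 1) : ℤ))
        = (2 * (i : ℤ) + 2) * ((2 * (i : ℤ) + 1) * ((2 * i).choose i : ℤ)) := by
      exact_mod_cast a3
    have hre : (k + (i + 1)) = k + i + 1 := by omega
    have hre2 : 2 * (i + 1) = 2 * i + 2 := by omega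
    rw [hre, hre2]
    set A := ((k + i).choose (2 * i) : ℤ)
    set B := ((2 * i).choose i : ℤ)
    set D := ((k + i + 1).choose (2 * i + 2) : ℤ)
    set E := ((2 * i + 2).choose (i + 1) : ℤ)
    set F := ((k + i + 1).choose (2 * i + 1) : ℤ)
    have hc : ((2 * (i : ℤ) + 1) * (2 * (i : ℤ) + 2)) ≠ 0 := by positivity
    apply mul_right_cancel₀ hc
    linear_combination (4 * ((k:ℤ) - i) * B * (2 * (i:ℤ) + 1) * (2 * (i:ℤ) + 2)) * a1'
      + (-4 * B * (2 * (i:ℤ) + 1) ^ 2 * (2 * (i:ℤ) + 2)) * a2'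
      + (-4 * D * (2 * (i:ℤ) + 1) * (2 * (i:ℤ) + 2)) * a3'

-- pointwise telescoping identity
lemma tele (k i : ℕ) :
    (2 * (k : ℤ) + 1) * ((k + i).choose (2 * i) : ℤ)
      = (2 * (i : ℤ) + 1) * (((k + i + 1).choose (2 * i + 1) : ℤ)
          + ((k + i).choose (2 * i + 1) : ℤ)) := by
  rcases lt_or_ge k i with hk | hk
  · have h1 : (k + i).choose (2 * i) = 0 := Nat.choose_eq_zero_of_lt (by omega)
    have h2 : (k + i + 1).choose (2 * i + 1) = 0 := Nat.choose_eq_zero_of_lt (by omega)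
    have h3 : (k + i).choose (2 * i + 1) = 0 := Nat.choose_eq_zero_of_lt (by omega)
    rw [h1, h2, h3]; push_cast; ring
  · have a1 : (k + i + 1) * (k + i).choose (2 * i)
        = (k + i + 1).choose (2 * i + 1) * (2 * i + 1) := Nat.add_one_mul_choose_eq (k + i) (2 * i)
    have a2 : (k + i).choose (2 * i + 1) * (2 * i + 1)
        = (k + i).choose (2 * i) * (k - i) := by
      have h := Nat.choose_succ_right_eq (k + i) (2 * i)
      rwa [show k + i - 2 * i = k - i by omega] at h
    have hki : ((k - i : ℕ) : ℤ) = (k : ℤ) - i := by push_cast [Nat.cast_sub hk]; ring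
    have a1' : ((k : ℤ) + i + 1) * ((k + i).choose (2 * i) : ℤ)
        = ((k + i + 1).choose (2 * i + 1) : ℤ) * (2 * (i : ℤ) + 1) := by exact_mod_cast a1
    have a2' : ((k + i).choose (2 * i + 1) : ℤ) * (2 * (i : ℤ) + 1)
        = ((k + i).choose (2 * i) : ℤ) * ((k : ℤ) - i) := by rw [← hki]; exact_mod_cast a2
    linear_combination a1' - a2'

-- closed form divisibility for the base case
lemma baseDvd (n i : ℕ) (hn : 0 < n) :
    (n : ℤ) ∣ (2 * (i : ℤ) + 1) * ((n + i).choose (2 * i + 1) : ℤ) * ((2 * i).choose i : ℤ) := by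
  have key : (2 * i + 1) * ((n + i).choose (2 * i + 1)) * ((2 * i).choose i)
      = n * ((n - 1).choose i * (n + i).choose i) := by
    have h1 : (n + i).choose (2 * i + 1) * (2 * i + 1) = (n + i).choose (2 * i) * (n - i) := by
      have h := Nat.choose_succ_right_eq (n + i) (2 * i)
      rwa [show n + i - 2 * i = n - i by omega] at h
    rcases le_or_gt n i with hni | hni
    · have e1 : (n + i).choose (2 * i + 1) = 0 := Nat.choose_eq_zero_of_lt (by omega)
      have e2 : (n - 1).choose i = 0 := Nat.choose_eq_zero_of_lt (by omega)
      rw [e1, e2]; ring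
    · have h2 : (n + i).choose (2 * i) * (2 * i).choose i
          = (n + i).choose i * n.choose i := by
        have := Nat.choose_mul (n := n + i) (show i ≤ 2 * i by omega)
        rwa [show n + i - i = n by omega, show 2 * i - i = i by omega] at this
      have h3 : n * (n - 1).choose i = n.choose (i + 1) * (i + 1) := by
        have := Nat.add_one_mul_choose_eq (n - 1) i
        rwa [show n - 1 + 1 = n by omega] at this
      have h4 : n.choose (i + 1) * (i + 1) = n.choose i * (n - i) := Nat.choose_succ_right_eq n i
      calc (2 * i + 1) * ((n + i).choose (2 * i + 1)) * ((2 * i).choose i)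
          = ((n + i).choose (2 * i + 1) * (2 * i + 1)) * ((2 * i).choose i) := by ring
        _ = ((n + i).choose (2 * i) * (n - i)) * (2 * i).choose i := by rw [h1]
        _ = ((n + i).choose (2 * i) * (2 * i).choose i) * (n - i) := by ring
        _ = ((n + i).choose i * n.choose i) * (n - i) := by rw [h2]
        _ = (n.choose i * (n - i)) * (n + i).choose i := by ring
        _ = (n.choose (i + 1) * (i + 1)) * (n + i).choose i := by rw [h4]
        _ = (n * (n - 1).choose i) * (n + i).choose i := by rw [h3]
        _ = n * ((n - 1).choose i * (n + i).choose i) := by ring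
  refine ⟨((n - 1).choose i * (n + i).choose i : ℕ), ?_⟩
  exact_mod_cast key

lemma baseSum (n i : ℕ) (hn : 0 < n) :
    (n : ℤ) ∣ ∑ k ∈ Finset.range n,
      (-1 : ℤ) ^ k * (2 * (k : ℤ) + 1) * ((k + i).choose (2 * i) : ℤ)
        * ((2 * i).choose i : ℤ) := by
  have hsum : ∑ k ∈ Finset.range n,
      (-1 : ℤ) ^ k * (2 * (k : ℤ) + 1) * ((k + i).choose (2 * i) : ℤ) * ((2 * i).choose i : ℤ)
      = (2 * (i : ℤ) + 1) * ((2 * i).choose i : ℤ) *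
        ∑ k ∈ Finset.range n,
          ((-1 : ℤ) ^ k * ((k + i).choose (2 * i + 1) : ℤ)
            - (-1 : ℤ) ^ (k + 1) * ((k + 1 + i).choose (2 * i + 1) : ℤ)) := by
    rw [Finset.mul_sum]
    refine Finset.sum_congr rfl fun k _ => ?_
    have := tele k i
    have hre : k + 1 + i = k + i + 1 := by omega
    rw [hre]
    calc (-1 : ℤ) ^ k * (2 * (k : ℤ) + 1) * ((k + i).choose (2 * i) : ℤ)
          * ((2 * i).choose i : ℤ)
        = (-1 : ℤ) ^ k * ((2 * (k : ℤ) + 1) * ((k + i).choose (2 * i) : ℤ))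
          * ((2 * i).choose i : ℤ) := by ring
      _ = (-1 : ℤ) ^ k * ((2 * (i : ℤ) + 1) * (((k + i + 1).choose (2 * i + 1) : ℤ)
            + ((k + i).choose (2 * i + 1) : ℤ))) * ((2 * i).choose i : ℤ) := by rw [this]
      _ = _ := by rw [pow_succ]; ring
  rw [hsum]
  rw [Finset.sum_range_sub' (fun k => (-1 : ℤ) ^ k * ((k + i).choose (2 * i + 1) : ℤ)) n]
  have h0 : (0 + i).choose (2 * i + 1) = 0 := Nat.choose_eq_zero_of_lt (by omega)
  rw [h0]
  have heq : (2 * (i:ℤ) + 1) * ((2*i).choose i : ℤ)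
      * ((0:ℤ) - (-1:ℤ)^n * (((n + i).choose (2*i+1) : ℤ)))
      = (-(-1:ℤ)^n) * ((2 * (i:ℤ) + 1) * (((n + i).choose (2*i+1)) : ℤ)
          * ((2*i).choose i : ℤ)) := by ring
  rw [show ((-1:ℤ)^0 * ((0:ℕ):ℤ) - (-1:ℤ)^n * (((n + i).choose (2*i+1) : ℤ)))
      = ((0:ℤ) - (-1:ℤ)^n * (((n + i).choose (2*i+1) : ℤ))) by push_cast; ring, heq]
  exact Dvd.dvd.mul_left (baseDvd n i hn) _
lemma mainSum (n : ℕ) (hn : 0 < n) (m : ℕ) : ∀ i : ℕ,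
    (n : ℤ) ∣ ∑ k ∈ Finset.range n,
      (-1 : ℤ) ^ k * (2 * (k : ℤ) + 1) ^ (2 * m + 1) * ((k + i).choose (2 * i) : ℤ)
        * ((2 * i).choose i : ℤ) := by
  induction m with
  | zero =>
    intro i
    have := baseSum n i hn
    simpa only [Nat.mul_zero, Nat.zero_add, pow_one] using this
  | succ m ih =>
    intro i
    have hsplit : ∑ k ∈ Finset.range n,
        (-1 : ℤ) ^ k * (2 * (k : ℤ) + 1) ^ (2 * (m + 1) + 1) * ((k + i).choose (2 * i) : ℤ)
          * ((2 * i).choose i : ℤ)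
        = 4 * ((i : ℤ) + 1) ^ 2 * (∑ k ∈ Finset.range n,
            (-1 : ℤ) ^ k * (2 * (k : ℤ) + 1) ^ (2 * m + 1)
              * ((k + (i + 1)).choose (2 * (i + 1)) : ℤ) * ((2 * (i + 1)).choose (i + 1) : ℤ))
          + (2 * (i : ℤ) + 1) ^ 2 * (∑ k ∈ Finset.range n,
            (-1 : ℤ) ^ k * (2 * (k : ℤ) + 1) ^ (2 * m + 1)
              * ((k + i).choose (2 * i) : ℤ) * ((2 * i).choose i : ℤ)) := by
      rw [Finset.mul_sum, Finset.mul_sum, ← Finset.sum_add_distrib]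
      refine Finset.sum_congr rfl fun k _ => ?_
      have hk := keyA k i
      have hpow : (2 * (k : ℤ) + 1) ^ (2 * (m + 1) + 1)
          = (2 * (k : ℤ) + 1) ^ (2 * m + 1) * (2 * (k : ℤ) + 1) ^ 2 := by
        rw [← pow_add]; ring_nf
      rw [hpow]
      linear_combination ((-1:ℤ)^k * (2 * (k:ℤ) + 1) ^ (2*m+1)) * hk
    rw [hsplit]
    exact dvd_add (Dvd.dvd.mul_left (ih (i + 1)) _) (Dvd.dvd.mul_left (ih i) _)

end Stmt8Aux

open Stmt8Aux in
theorem stmt_8 (l n : ℕ) (hl : 0 < l) (hn : 0 < n) (i : ℕ) (hi : i ≤ n - 1) :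
    (n : ℤ) ∣ ∑ k ∈ Finset.Ico i n,
        (-1 : ℤ) ^ k * (2 * (k : ℤ) + 1) ^ (2 * l - 1) *
          ((k + i).choose (2 * i) : ℤ) * ((2 * i).choose i : ℤ) := by
  obtain ⟨m, rfl⟩ : ∃ m, l = m + 1 := ⟨l - 1, by omega⟩
  have hexp : 2 * (m + 1) - 1 = 2 * m + 1 := by omega
  rw [hexp]
  have hin : i ≤ n := by omega
  have hsplit := Finset.sum_Ico_consecutive
    (f := fun k => (-1 : ℤ) ^ k * (2 * (k : ℤ) + 1) ^ (2 * m + 1) *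
      ((k + i).choose (2 * i) : ℤ) * ((2 * i).choose i : ℤ))
    (Nat.zero_le i) hin
  have hzero : ∑ k ∈ Finset.Ico 0 i,
      (-1 : ℤ) ^ k * (2 * (k : ℤ) + 1) ^ (2 * m + 1) *
        ((k + i).choose (2 * i) : ℤ) * ((2 * i).choose i : ℤ) = 0 := by
    apply Finset.sum_eq_zero
    intro k hk
    rw [Finset.mem_Ico] at hk
    have : (k + i).choose (2 * i) = 0 := Nat.choose_eq_zero_of_lt (by omega)
    rw [this]
    push_cast
    ring
  have := mainSum n hn m i
  rw [Finset.range_eq_Ico, ← hsplit] at this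
  rw [hzero, zero_add] at this
  exact this
end

section
/- For every non-negative integer n, 64^n · ∑_{k=0}^{n} C(-1/4, k)^2 · C(-3/4, n-k)^2 = ∑_{k=0}^{n} C(2k, k)^3 · C(2n-2k, n-k) · 16^{n-k}. -/
open Finset

namespace St10

noncomputable def a : ℕ → ℚ
  | 0 => 1
  | k+1 => a k * (4*k+1) / (4*k+4)

noncomputable def b : ℕ → ℚ
  | 0 => 1
  | k+1 => b k * (4*k+3) / (4*k+4)

noncomputable def c : ℕ → ℚ
  | 0 => 1
  | k+1 => c k * (2*k+1) / (2*k+2)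

lemma a_rec (k : ℕ) : ((k:ℚ)+1) * a (k+1) = ((k:ℚ)+1/4) * a k := by
  show ((k:ℚ)+1) * (a k * (4*k+1) / (4*k+4)) = _
  have h : (4*(k:ℚ)+4) ≠ 0 := by positivity
  field_simp

lemma b_rec (k : ℕ) : ((k:ℚ)+1) * b (k+1) = ((k:ℚ)+3/4) * b k := by
  show ((k:ℚ)+1) * (b k * (4*k+3) / (4*k+4)) = _
  have h : (4*(k:ℚ)+4) ≠ 0 := by positivity
  field_simp

lemma c_rec (k : ℕ) : ((k:ℚ)+1) * c (k+1) = ((k:ℚ)+1/2) * c k := by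
  show ((k:ℚ)+1) * (c k * (2*k+1) / (2*k+2)) = _
  have h : (2*(k:ℚ)+2) ≠ 0 := by positivity
  field_simp

lemma a_succ (k : ℕ) : a (k+1) = ((k:ℚ)+1/4) / ((k:ℚ)+1) * a k := by
  have h := a_rec k
  have hne : ((k:ℚ)+1) ≠ 0 := by positivity
  field_simp
  linarith [h]

lemma b_succ (k : ℕ) : b (k+1) = ((k:ℚ)+3/4) / ((k:ℚ)+1) * b k := by
  have h := b_rec k
  have hne : ((k:ℚ)+1) ≠ 0 := by positivity
  field_simp
  linarith [h]

lemma c_succ (k : ℕ) : c (k+1) = ((k:ℚ)+1/2) / ((k:ℚ)+1) * c k := by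
  have h := c_rec k
  have hne : ((k:ℚ)+1) ≠ 0 := by positivity
  field_simp
  linarith [h]

lemma ringChoose_succ (r : ℚ) (n : ℕ) :
    ((n:ℚ)+1) * Ring.choose r (n+1) = (r - n) * Ring.choose r n := by
  have h0 := Ring.descPochhammer_eq_factorial_smul_choose (R := ℚ) r n
  have h1 := Ring.descPochhammer_eq_factorial_smul_choose (R := ℚ) r (n+1)
  rw [descPochhammer_succ_right, Polynomial.smeval_mul, Polynomial.smeval_sub,
    Polynomial.smeval_X, Polynomial.smeval_natCast, h0] at h1
  have hne : (n.factorial : ℚ) ≠ 0 := by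
    exact_mod_cast Nat.factorial_ne_zero n
  have h2 : (n.factorial : ℚ) * (((n:ℚ)+1) * Ring.choose r (n+1)) =
      (n.factorial : ℚ) * ((r - n) * Ring.choose r n) := by
    simp only [nsmul_eq_mul] at h1
    have hfac : (((n+1).factorial : ℕ) : ℚ) = (n.factorial : ℚ) * ((n:ℚ)+1) := by
      rw [Nat.factorial_succ]; push_cast; ring
    rw [hfac] at h1
    linear_combination -h1

  exact mul_left_cancel₀ hne h2

lemma choose_neg_quarter_sq (k : ℕ) : (Ring.choose (-(1/4) : ℚ) k)^2 = a k ^ 2 := by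
  have key : Ring.choose (-(1/4) : ℚ) k = (-1)^k * a k := by
    induction k with
    | zero => simp [a, Ring.choose_zero_right]
    | succ k ih =>
      have h := ringChoose_succ (-(1/4) : ℚ) k
      rw [ih] at h
      have hrec := a_succ k
      have hne : ((k:ℚ)+1) ≠ 0 := by positivity
      have : Ring.choose (-(1/4) : ℚ) (k+1) = (-(1/4) - k) * ((-1)^k * a k) / ((k:ℚ)+1) := by
        field_simp
        linarith [h]
      rw [this, hrec]
      field_simp
      ring
  rw [key, mul_pow, ← pow_mul, mul_comm k 2, pow_mul]
  norm_num

lemma choose_neg_three_quarter_sq (k : ℕ) : (Ring.choose (-(3/4) : ℚ) k)^2 = b k ^ 2 := by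
  have key : Ring.choose (-(3/4) : ℚ) k = (-1)^k * b k := by
    induction k with
    | zero => simp [b, Ring.choose_zero_right]
    | succ k ih =>
      have h := ringChoose_succ (-(3/4) : ℚ) k
      rw [ih] at h
      have hrec := b_succ k
      have hne : ((k:ℚ)+1) ≠ 0 := by positivity
      have : Ring.choose (-(3/4) : ℚ) (k+1) = (-(3/4) - k) * ((-1)^k * b k) / ((k:ℚ)+1) := by
        field_simp
        linarith [h]
      rw [this, hrec]
      field_simp
      ring
  rw [key, mul_pow, ← pow_mul, mul_comm k 2, pow_mul]
  norm_num

lemma central_binom_eq (k : ℕ) : (((2*k).choose k : ℕ) : ℚ) = 4^k * c k := by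
  induction k with
  | zero => simp [c]
  | succ k ih =>
    have h := Nat.succ_mul_centralBinom_succ k
    have h' : ((k:ℚ)+1) * (((2*(k+1)).choose (k+1) : ℕ) : ℚ) =
        2 * (2*(k:ℚ)+1) * (((2*k).choose k : ℕ) : ℚ) := by
      have h2 := congrArg (fun x : ℕ => (x : ℚ)) h
      simp only [Nat.centralBinom] at h2
      push_cast at h2 ⊢
      convert h2 using 2
    have hrec := c_succ k
    have hne : ((k:ℚ)+1) ≠ 0 := by positivity
    have key : ((k:ℚ)+1) * (((2*(k+1)).choose (k+1) : ℕ) : ℚ) =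
        ((k:ℚ)+1) * (4^(k+1) * c (k+1)) := by
      rw [h', ih, hrec]
      field_simp
      ring
    exact mul_left_cancel₀ hne key

/-- Euler transformation at coefficient level (Pfaff–Saalschütz instance). -/
lemma eqE (m : ℕ) : ∑ k ∈ range (m+1), a k ^ 2 * c (m - k) = b m ^ 2 := by
  induction m with
  | zero => simp [a, b, c]
  | succ m ih =>
    set g : ℕ → ℚ := fun k => -(k:ℚ)^2 * a k ^2 * c (m+1-k) with hg
    have tel : ∀ k ∈ range (m+1),
        ((m:ℚ)+1)^2 * (a k ^2 * c (m+1-k)) - ((m:ℚ)+3/4)^2 * (a k ^2 * c (m-k))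
          = g (k+1) - g k := by
      intro k hk
      rw [mem_range] at hk
      obtain ⟨j, rfl⟩ : ∃ j, m = k + j := ⟨m - k, by omega⟩
      have e1 : k + j + 1 - k = j + 1 := by omega
      have e2 : k + j - k = j := by omega
      have e3 : k + j + 1 - (k + 1) = j := by omega
      simp only [hg, e1, e2, e3]
      rw [a_succ k, c_succ j]
      have hk1 : ((k:ℚ)+1) ≠ 0 := by positivity
      have hj1 : ((j:ℚ)+1) ≠ 0 := by positivity
      push_cast
      field_simp
      ring
    have hsum := Finset.sum_congr rfl tel
    rw [Finset.sum_range_sub g] at hsum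
    rw [Finset.sum_sub_distrib, ← Finset.mul_sum, ← Finset.mul_sum, ih] at hsum
    have hgm : g (m+1) - g 0 = -((m:ℚ)+1)^2 * a (m+1)^2 * c 0 := by
      simp only [hg, Nat.add_sub_cancel]
      push_cast
      ring_nf
      simp [Nat.sub_self]
    have hb := b_rec m
    have hne : (((m:ℚ)+1))^2 ≠ 0 := by positivity
    have key : ((m:ℚ)+1)^2 * (∑ k ∈ range (m+2), a k ^2 * c (m+1-k))
        = ((m:ℚ)+1)^2 * (b (m+1) ^ 2) := by
      rw [Finset.sum_range_succ, Nat.sub_self]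
      have hb2 : ((m:ℚ)+1)^2 * b (m+1)^2 = ((m:ℚ)+3/4)^2 * b m ^2 := by
        linear_combination (((m:ℚ)+1) * b (m+1) + ((m:ℚ)+3/4) * b m) * hb
      rw [hgm] at hsum
      rw [mul_add, hb2]
      linear_combination hsum
    have := mul_left_cancel₀ hne key
    simpa using this

/-- Clausen's formula at coefficient level. -/
lemma eqC (m : ℕ) : ∑ k ∈ range (m+1), a k ^ 2 * a (m - k) ^ 2 = c m ^ 3 := by
  induction m with
  | zero => simp [a, c]
  | succ m ih =>
    set g : ℕ → ℚ := fun k => (k:ℚ)^2 * (2*(k:ℚ) - 3*(m:ℚ) - 3) * a k ^2 * a (m+1-k) ^2 with hg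
    have tel : ∀ k ∈ range (m+1),
        ((m:ℚ)+1)^3 * (a k ^2 * a (m+1-k) ^2) - ((m:ℚ)+1/2)^3 * (a k ^2 * a (m-k) ^2)
          = g (k+1) - g k := by
      intro k hk
      rw [mem_range] at hk
      obtain ⟨j, rfl⟩ : ∃ j, m = k + j := ⟨m - k, by omega⟩
      have e1 : k + j + 1 - k = j + 1 := by omega
      have e2 : k + j - k = j := by omega
      have e3 : k + j + 1 - (k + 1) = j := by omega
      simp only [hg, e1, e2, e3]
      rw [a_succ k, a_succ j]
      have hk1 : ((k:ℚ)+1) ≠ 0 := by positivity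
      have hj1 : ((j:ℚ)+1) ≠ 0 := by positivity
      push_cast
      field_simp
      ring
    have hsum := Finset.sum_congr rfl tel
    rw [Finset.sum_range_sub g] at hsum
    rw [Finset.sum_sub_distrib, ← Finset.mul_sum, ← Finset.mul_sum, ih] at hsum
    have hgm : g (m+1) - g 0 = -((m:ℚ)+1)^3 * a (m+1)^2 * a 0 ^2 := by
      simp only [hg, Nat.add_sub_cancel]
      push_cast
      ring_nf
      simp [Nat.sub_self]
    have hc := c_rec m
    have hne : (((m:ℚ)+1))^3 ≠ 0 := by positivity
    have key : ((m:ℚ)+1)^3 * (∑ k ∈ range (m+2), a k ^2 * a (m+1-k) ^2)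
        = ((m:ℚ)+1)^3 * (c (m+1) ^ 3) := by
      rw [Finset.sum_range_succ, Nat.sub_self]
      have hc2 : ((m:ℚ)+1)^3 * c (m+1)^3 = ((m:ℚ)+1/2)^3 * c m ^3 := by
        linear_combination (((m:ℚ)+1)^2 * c (m+1)^2 + ((m:ℚ)+1) * c (m+1) * ((m:ℚ)+1/2) * c m
          + ((m:ℚ)+1/2)^2 * c m ^2) * hc
      rw [hgm] at hsum
      rw [mul_add, hc2]
      linear_combination hsum
    have := mul_left_cancel₀ hne key
    simpa using this

/-- The core identity, via power series. -/
lemma core (n : ℕ) : ∑ k ∈ range (n+1), a k ^ 2 * b (n-k) ^ 2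
    = ∑ k ∈ range (n+1), c k ^ 3 * c (n-k) := by
  set A2 : PowerSeries ℚ := PowerSeries.mk fun k => a k ^ 2 with hA2
  set B2 : PowerSeries ℚ := PowerSeries.mk fun k => b k ^ 2 with hB2
  set C1 : PowerSeries ℚ := PowerSeries.mk fun k => c k with hC1
  set C3 : PowerSeries ℚ := PowerSeries.mk fun k => c k ^ 3 with hC3
  have hE : A2 * C1 = B2 := by
    ext m
    rw [PowerSeries.coeff_mul, Finset.Nat.sum_antidiagonal_eq_sum_range_succ_mk]
    simp only [hA2, hB2, hC1, PowerSeries.coeff_mk]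
    exact eqE m
  have hC : A2 * A2 = C3 := by
    ext m
    rw [PowerSeries.coeff_mul, Finset.Nat.sum_antidiagonal_eq_sum_range_succ_mk]
    simp only [hA2, hC3, PowerSeries.coeff_mk]
    exact eqC m
  have h1 : ∑ k ∈ range (n+1), a k ^ 2 * b (n-k) ^ 2 = PowerSeries.coeff n (A2 * B2) := by
    rw [PowerSeries.coeff_mul, Finset.Nat.sum_antidiagonal_eq_sum_range_succ_mk]
    simp only [hA2, hB2, PowerSeries.coeff_mk]
  have h2 : ∑ k ∈ range (n+1), c k ^ 3 * c (n-k) = PowerSeries.coeff n (C3 * C1) := by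
    rw [PowerSeries.coeff_mul, Finset.Nat.sum_antidiagonal_eq_sum_range_succ_mk]
    simp only [hC3, hC1, PowerSeries.coeff_mk]
  rw [h1, h2, ← hE, ← hC, mul_assoc]

end St10

theorem stmt_10 (n : ℕ) :
    (64 : ℚ) ^ n * ∑ k ∈ range (n + 1),
        (Ring.choose (-(1 / 4) : ℚ) k) ^ 2 * (Ring.choose (-(3 / 4) : ℚ) (n - k)) ^ 2 =
      ∑ k ∈ range (n + 1),
        ((2 * k).choose k : ℚ) ^ 3 * ((2 * n - 2 * k).choose (n - k) : ℚ) * (16 : ℚ) ^ (n - k) := by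
  have hL : ∀ k ∈ range (n+1),
      (Ring.choose (-(1 / 4) : ℚ) k) ^ 2 * (Ring.choose (-(3 / 4) : ℚ) (n - k)) ^ 2
        = St10.a k ^ 2 * St10.b (n-k) ^ 2 := by
    intro k _
    rw [St10.choose_neg_quarter_sq, St10.choose_neg_three_quarter_sq]
  have hR : ∀ k ∈ range (n+1),
      ((2 * k).choose k : ℚ) ^ 3 * ((2 * n - 2 * k).choose (n - k) : ℚ) * (16 : ℚ) ^ (n - k)
        = (64:ℚ)^n * (St10.c k ^ 3 * St10.c (n-k)) := by
    intro k hk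
    rw [mem_range] at hk
    have hkn : k ≤ n := by omega
    have e1 : 2 * n - 2 * k = 2 * (n - k) := by omega
    rw [e1, St10.central_binom_eq k, St10.central_binom_eq (n-k)]
    have e2 : (64:ℚ)^n = 64^k * 64^(n-k) := by
      rw [← pow_add]; congr 1; omega
    rw [e2]
    have e3 : ((4:ℚ)^k)^3 = 64^k := by
      rw [← pow_mul, mul_comm k 3, pow_mul]; norm_num
    have e4 : (4:ℚ)^(n-k) * 16^(n-k) = 64^(n-k) := by
      rw [← mul_pow]; norm_num
    calc (4^k * St10.c k)^3 * (4^(n-k) * St10.c (n-k)) * 16^(n-k)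
        = ((4:ℚ)^k)^3 * St10.c k ^3 * ((4:ℚ)^(n-k) * 16^(n-k)) * St10.c (n-k) := by ring
      _ = 64^k * 64^(n-k) * (St10.c k ^3 * St10.c (n-k)) := by rw [e3, e4]; ring
  rw [Finset.sum_congr rfl hL, Finset.sum_congr rfl hR, ← Finset.mul_sum, St10.core]
end

section
/- Let n be a positive integer and x an integer. Then (1/n) · ∑_{k=0}^{n-1} C(n, k+1) · C(n+k, k) · C(2k, k) · C(x+k, 2k) equals ∑_{k=0}^{n-1} (1/(k+1)) · C(n-1, k) · C(n+k, k) · C(2k, k) · C(x+k, 2k), and this common value is an integer. -/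
open Finset

theorem stmt_11 (n : ℕ) (hn : 0 < n) (x : ℤ) :
    (1 / (n : ℚ)) * ∑ k ∈ range n,
        (n.choose (k + 1) : ℚ) * ((n + k).choose k : ℚ) * ((2 * k).choose k : ℚ) *
          ((Ring.choose (x + (k : ℤ)) (2 * k) : ℤ) : ℚ) =
      (∑ k ∈ range n,
        (1 / ((k : ℚ) + 1)) * ((n - 1).choose k : ℚ) * ((n + k).choose k : ℚ) *
          ((2 * k).choose k : ℚ) * ((Ring.choose (x + (k : ℤ)) (2 * k) : ℤ) : ℚ)) ∧
    ∃ z : ℤ,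
      (1 / (n : ℚ)) * ∑ k ∈ range n,
          (n.choose (k + 1) : ℚ) * ((n + k).choose k : ℚ) * ((2 * k).choose k : ℚ) *
            ((Ring.choose (x + (k : ℤ)) (2 * k) : ℤ) : ℚ) = (z : ℚ) := by
  have hn0 : (n : ℚ) ≠ 0 := Nat.cast_ne_zero.mpr hn.ne'
  have key : ∀ k : ℕ, (1 / (n : ℚ)) * (n.choose (k + 1) : ℚ)
      = (1 / ((k : ℚ) + 1)) * ((n - 1).choose k : ℚ) := by
    intro k
    have h := Nat.add_one_mul_choose_eq (n - 1) k
    rw [Nat.sub_add_cancel hn] at h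
    have hq : (n : ℚ) * ((n - 1).choose k : ℚ) = (n.choose (k + 1) : ℚ) * ((k : ℚ) + 1) := by
      exact_mod_cast congrArg (Nat.cast : ℕ → ℚ) h
    field_simp
    linarith [hq]
  have heq : (1 / (n : ℚ)) * ∑ k ∈ range n,
        (n.choose (k + 1) : ℚ) * ((n + k).choose k : ℚ) * ((2 * k).choose k : ℚ) *
          ((Ring.choose (x + (k : ℤ)) (2 * k) : ℤ) : ℚ) =
      ∑ k ∈ range n,
        (1 / ((k : ℚ) + 1)) * ((n - 1).choose k : ℚ) * ((n + k).choose k : ℚ) *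
          ((2 * k).choose k : ℚ) * ((Ring.choose (x + (k : ℤ)) (2 * k) : ℤ) : ℚ) := by
    rw [mul_sum]
    refine sum_congr rfl fun k _ => ?_
    have h := key k
    calc (1 / (n : ℚ)) * ((n.choose (k + 1) : ℚ) * ((n + k).choose k : ℚ) * ((2 * k).choose k : ℚ) *
          ((Ring.choose (x + (k : ℤ)) (2 * k) : ℤ) : ℚ))
        = ((1 / (n : ℚ)) * (n.choose (k + 1) : ℚ)) * (((n + k).choose k : ℚ) * ((2 * k).choose k : ℚ) *
          ((Ring.choose (x + (k : ℤ)) (2 * k) : ℤ) : ℚ)) := by ring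
      _ = _ := by rw [h]; ring
  refine ⟨heq, ⟨∑ k ∈ range n, (catalan k : ℤ) * ((n - 1).choose k : ℤ) *
      ((n + k).choose k : ℤ) * Ring.choose (x + (k : ℤ)) (2 * k), ?_⟩⟩
  rw [heq]
  push_cast
  refine sum_congr rfl fun k _ => ?_
  have hc : ((k : ℚ) + 1) * (catalan k : ℚ) = ((2 * k).choose k : ℚ) := by
    exact_mod_cast congrArg (Nat.cast : ℕ → ℚ) (succ_mul_catalan_eq_centralBinom k)
  have hk1 : ((k : ℚ) + 1) ≠ 0 := by positivity
  have hcat : (1 / ((k : ℚ) + 1)) * ((2 * k).choose k : ℚ) = (catalan k : ℚ) := by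
    field_simp
    linarith [hc]
  calc (1 / ((k : ℚ) + 1)) * ((n - 1).choose k : ℚ) * ((n + k).choose k : ℚ) *
        ((2 * k).choose k : ℚ) * ((Ring.choose (x + (k : ℤ)) (2 * k) : ℤ) : ℚ)
      = ((1 / ((k : ℚ) + 1)) * ((2 * k).choose k : ℚ)) * (((n - 1).choose k : ℚ) *
        ((n + k).choose k : ℚ) * ((Ring.choose (x + (k : ℤ)) (2 * k) : ℤ) : ℚ)) := by ring
    _ = _ := by rw [hcat]; ring
end

section
/- Let n be a positive integer, l a positive integer, k a non-negative integer with k ≤ n-1, and suppose l = 1. Then n^2 divides ∑_{m=k}^{n-1} (2m+1) · C(m+k, 2k) · C(2k, k)^2. -/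
open Finset Nat

lemma step_id (k n : ℕ) (hk : k ≤ n) :
    n * n.choose (k+1) * (n+k).choose k + (2*n+1) * (n+k).choose (2*k) * (2*k).choose k
      = (n+1) * (n+1).choose (k+1) * (n+k+1).choose k := by
  rcases eq_or_lt_of_le hk with h | h
  · subst h
    simp [Nat.choose_eq_zero_of_lt (Nat.lt_succ_self k), Nat.choose_self, two_mul]
    have h1 := Nat.add_one_mul_choose_eq (k + k) k
    have h2 : (k + k + 1).choose (k + 1) = (k + k + 1).choose k := by
      have := Nat.choose_symm (n := k + k + 1) (k := k + 1) (by omega)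
      have e : k + k + 1 - (k + 1) = k := by omega
      rw [e] at this
      exact this.symm
    rw [h2] at h1
    rw [show k + k + 1 = (k+k) + 1 from rfl, h1]
    ring
  · obtain ⟨j, rfl⟩ : ∃ j, n = k + 1 + j := ⟨n - (k+1), by omega⟩
    have := @Nat.cast_injective ℚ _ _
    apply this
    push_cast
    rw [Nat.cast_choose ℚ (show k + 1 ≤ k + 1 + j by omega),
        Nat.cast_choose ℚ (show k ≤ k + 1 + j + k by omega),
        Nat.cast_choose ℚ (show 2*k ≤ k + 1 + j + k by omega),
        Nat.cast_choose ℚ (show k ≤ 2*k by omega),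
        Nat.cast_choose ℚ (show k + 1 ≤ k + 1 + j + 1 by omega),
        Nat.cast_choose ℚ (show k ≤ k + 1 + j + k + 1 by omega)]
    have e1 : k + 1 + j - (k + 1) = j := by omega
    have e2 : k + 1 + j + k - k = k + 1 + j := by omega
    have e3 : k + 1 + j + k - 2*k = j + 1 := by omega
    have e4 : 2*k - k = k := by omega
    have e5 : k + 1 + j + 1 - (k + 1) = j + 1 := by omega
    have e6 : k + 1 + j + k + 1 - k = k + 1 + j + 1 := by omega
    rw [e1, e2, e3, e4, e5, e6]
    have f1 : ((j+1)! : ℚ) = (j+1) * j ! := by push_cast [Nat.factorial_succ]; ring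
    have f2 : ((k+1)! : ℚ) = (k+1) * k ! := by push_cast [Nat.factorial_succ]; ring
    have f3 : ((k+1+j+k+1)! : ℚ) = (k+1+j+k+1) * (k+1+j+k)! := by
      push_cast [Nat.factorial_succ]; ring
    have f4 : ((k+1+j+1)! : ℚ) = (k+1+j+1) * (k+1+j)! := by
      push_cast [Nat.factorial_succ]; ring
    have f5 : ((2*k)! : ℚ) ≠ 0 := by positivity
    have f6 : (k ! : ℚ) ≠ 0 := by positivity
    have f7 : (j ! : ℚ) ≠ 0 := by positivity
    have f8 : ((k+1+j)! : ℚ) ≠ 0 := by positivity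
    have f9 : ((k+1+j+k)! : ℚ) ≠ 0 := by positivity
    rw [f1, f2, f3, f4]
    field_simp
    ring

lemma sum_eq (k n : ℕ) :
    ∑ m ∈ Finset.Ico k n, (2*m+1) * (m+k).choose (2*k) * ((2*k).choose k)
      = n * n.choose (k+1) * (n+k).choose k := by
  induction n with
  | zero => simp
  | succ n ih =>
    rcases le_or_gt k n with hk | hk
    · rw [Finset.sum_Ico_succ_top hk, ih, step_id k n hk, Nat.add_right_comm n k 1]
    · rw [Finset.Ico_eq_empty (by omega), Finset.sum_empty,
        Nat.choose_eq_zero_of_lt (by omega)]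
      simp

theorem stmt_16 (l n : ℕ) (hl : 0 < l) (hn : 0 < n) (hl1 : l = 1) (k : ℕ) (hk : k ≤ n - 1) :
    n ^ 2 ∣ ∑ m ∈ Finset.Ico k n,
        (2 * m + 1) * (m + k).choose (2 * k) * ((2 * k).choose k) ^ 2 := by
  have hsum : ∑ m ∈ Finset.Ico k n,
      (2 * m + 1) * (m + k).choose (2 * k) * ((2 * k).choose k) ^ 2
      = (∑ m ∈ Finset.Ico k n, (2*m+1) * (m+k).choose (2*k) * ((2*k).choose k))
        * ((2*k).choose k) := by
    rw [Finset.sum_mul]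
    apply Finset.sum_congr rfl
    intro m _
    ring
  rw [hsum, sum_eq]
  obtain ⟨c, hc⟩ : (k + 1) ∣ (2*k).choose k := by
    have := Nat.succ_dvd_centralBinom k
    rwa [Nat.centralBinom] at this
  obtain ⟨n', rfl⟩ : ∃ n', n = n' + 1 := ⟨n - 1, by omega⟩
  have h1 : (n'+1) * n'.choose k = (n'+1).choose (k+1) * (k+1) :=
    Nat.add_one_mul_choose_eq n' k
  refine ⟨n'.choose k * (n' + 1 + k).choose k * c, ?_⟩
  calc (n'+1) * (n'+1).choose (k+1) * (n'+1+k).choose k * (2*k).choose k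
      = ((n'+1).choose (k+1) * (k+1)) * (n'+1) * (n'+1+k).choose k * c := by
        rw [hc]; ring
    _ = ((n'+1) * n'.choose k) * (n'+1) * (n'+1+k).choose k * c := by rw [h1]
    _ = (n'+1)^2 * (n'.choose k * (n'+1+k).choose k * c) := by ring
end
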